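/- arXiv:2412.19230 — 2 statements merged into one kernel-verified Lean document; each statement's English description precedes it below -/
import Mathlib

section
/- Let G be a minimal counterexample to the statement 'mad(G) < 8/3 and Δ(G) ≥ 4 implies χ'_ss(G) ≤ 2Δ+2' (minimal in |V(G)|+|E(G)|), and let G* be obtained from G by deleting all vertices of degree 1. Then G* has minimum degree at least 2. -/
namespace SSE

open SimpleGraph

variable {V : Type*} {W : Type*}

/-- The set of vertices covered by a set of edges. -/
def cov (M : Set (Sym2 V)) : Set V := {v | ∃ e ∈ M, v ∈ e}

/-- `M` is a matching of `G`: a set of pairwise disjoint edges of `G`. -/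
def IsMatchingSet (G : SimpleGraph V) (M : Set (Sym2 V)) : Prop :=
  M ⊆ G.edgeSet ∧ ∀ e ∈ M, ∀ f ∈ M, e ≠ f → ∀ v : V, v ∈ e → v ∉ f

/-- `v` is a pendant vertex (degree 1) of the subgraph `G_M` of `G` induced by
the vertices covered by `M`. -/
def PendantIn (G : SimpleGraph V) (M : Set (Sym2 V)) (v : V) : Prop :=
  v ∈ cov M ∧ ∃! u, u ∈ cov M ∧ G.Adj v u

/-- `M` is an induced (strong) matching of `G`: every vertex of `G_M` is pendant in `G_M`. -/
def IsInducedMatching (G : SimpleGraph V) (M : Set (Sym2 V)) : Prop :=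
  IsMatchingSet G M ∧ ∀ v ∈ cov M, PendantIn G M v

/-- `M` is a semistrong matching of `G`: every edge of `M` is a pendant edge of `G_M`. -/
def IsSemistrongMatching (G : SimpleGraph V) (M : Set (Sym2 V)) : Prop :=
  IsMatchingSet G M ∧ ∀ e ∈ M, ∃ v, v ∈ e ∧ PendantIn G M v

/-- `N` is a perfect matching of the subgraph of `G` induced by `S`. -/
def IsPerfectMatchingOn (G : SimpleGraph V) (S : Set V) (N : Set (Sym2 V)) : Prop :=
  IsMatchingSet G N ∧ (∀ e ∈ N, ∀ v : V, v ∈ e → v ∈ S) ∧ cov N = S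

/-- `M` is a uniquely restricted matching of `G`: it is the unique perfect matching
of the subgraph induced by the vertices it covers. -/
def IsUniquelyRestrictedMatching (G : SimpleGraph V) (M : Set (Sym2 V)) : Prop :=
  IsMatchingSet G M ∧ ∀ N : Set (Sym2 V), IsPerfectMatchingOn G (cov M) N → N = M

/-- An edge coloring of `G` with colors `< k` each of whose color classes satisfies `P`. -/
def IsPColoring (G : SimpleGraph V) (P : SimpleGraph V → Set (Sym2 V) → Prop)
    (c : Sym2 V → ℕ) (k : ℕ) : Prop :=
  (∀ e ∈ G.edgeSet, c e < k) ∧ ∀ i : ℕ, P G {e | e ∈ G.edgeSet ∧ c e = i}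

/-- The least number of colors in an edge coloring of `G` whose color classes satisfy `P`. -/
noncomputable def pIndex (G : SimpleGraph V)
    (P : SimpleGraph V → Set (Sym2 V) → Prop) : ℕ :=
  sInf {k | ∃ c, IsPColoring G P c k}

/-- The chromatic index. -/
noncomputable def chromIndex (G : SimpleGraph V) : ℕ := pIndex G IsMatchingSet

/-- The uniquely restricted chromatic index. -/
noncomputable def urIndex (G : SimpleGraph V) : ℕ := pIndex G IsUniquelyRestrictedMatching

/-- The semistrong chromatic index. -/
noncomputable def ssIndex (G : SimpleGraph V) : ℕ := pIndex G IsSemistrongMatching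

/-- The strong chromatic index. -/
noncomputable def strongIndex (G : SimpleGraph V) : ℕ := pIndex G IsInducedMatching

/-- The degree of a vertex. -/
noncomputable def natDeg (G : SimpleGraph V) (v : V) : ℕ := (G.neighborSet v).ncard

/-- The maximum average degree of `G` is (strictly) less than `q`:
every nonempty (induced) subgraph has average degree `< q`. -/
def MadLT (G : SimpleGraph V) (q : ℚ) : Prop :=
  ∀ s : Set V, s.Finite → s.Nonempty →
    (2 * ({e ∈ G.edgeSet | ∀ v ∈ e, v ∈ s}.ncard : ℚ)) < q * s.ncard

/-- `K` is a minor of `G` (branch-set formulation). -/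
def HasMinor (G : SimpleGraph V) (K : SimpleGraph W) : Prop :=
  ∃ B : W → Set V, (∀ w, (B w).Nonempty) ∧
    (∀ w, (G.induce (B w)).Connected) ∧
    (Pairwise fun w w' => Disjoint (B w) (B w')) ∧
    (∀ w w', K.Adj w w' → ∃ u ∈ B w, ∃ v ∈ B w', G.Adj u v)

/-- `G` is planar (by Wagner's theorem: no `K₅` minor and no `K₃,₃` minor). -/
def IsPlanar (G : SimpleGraph V) : Prop :=
  ¬ HasMinor G (completeGraph (Fin 5)) ∧
  ¬ HasMinor G (completeBipartiteGraph (Fin 3) (Fin 3))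

/-- The join `C_Δ ∨ I_2` of a cycle on `Δ` vertices with an independent set of 2 vertices. -/
def joinCI (n : ℕ) : SimpleGraph (Fin n ⊕ Fin 2) :=
  SimpleGraph.fromRel (fun x y =>
    match x, y with
    | Sum.inl a, Sum.inl b => (SimpleGraph.cycleGraph n).Adj a b
    | Sum.inl _, Sum.inr _ => True
    | _, _ => False)

/-- `G` contains an `M`-alternating cycle: a cycle whose edges alternate between
edges in `M` and edges not in `M` (cyclically). -/
def HasAlternatingCycle (G : SimpleGraph V) (M : Set (Sym2 V)) : Prop :=
  ∃ (v : V) (c : G.Walk v v), c.IsCycle ∧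
    List.Chain' (fun e f => ¬(e ∈ M ↔ f ∈ M)) c.edges ∧
    ∀ e ∈ c.edges.head?, ∀ f ∈ c.edges.getLast?, ¬(e ∈ M ↔ f ∈ M)

/-- Edges `e` and `f` lie together on a cycle of length 4 in `G`. -/
def OnCommonC4 (G : SimpleGraph V) (e f : Sym2 V) : Prop :=
  ∃ (v : V) (c : G.Walk v v), c.IsCycle ∧ c.length = 4 ∧ e ∈ c.edges ∧ f ∈ c.edges


/-- A counterexample to `mad < 8/3 ∧ Δ ≥ 4 → χ'_ss ≤ 2Δ+2`: a connected graph with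
maximum degree `D ≥ 4`, `mad < 8/3` and `χ'_ss > 2D+2`. -/
def IsCex {m : ℕ} (H : SimpleGraph (Fin m)) : Prop :=
  H.Connected ∧ MadLT H (8 / 3) ∧
    ∃ D : ℕ, 4 ≤ D ∧ (∀ v, natDeg H v ≤ D) ∧ (∃ v, natDeg H v = D) ∧
      2 * D + 2 < ssIndex H


/-! ### Auxiliary lemmas -/

section Aux

variable {n m : ℕ}

lemma natDeg_eq_ncard (G : SimpleGraph V) (v : V) : natDeg G v = (G.neighborSet v).ncard := rfl

/-- The conflict relation: edges at distance ≤ 1. -/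
def Conf (G : SimpleGraph V) (e f : Sym2 V) : Prop :=
  ∃ a ∈ e, ∃ b ∈ f, a = b ∨ G.Adj a b

lemma Conf.symm {G : SimpleGraph V} {e f : Sym2 V} (h : Conf G e f) : Conf G f e := by
  obtain ⟨a, ha, b, hb, hab⟩ := h
  exact ⟨b, hb, a, ha, by cases hab with | inl h => exact Or.inl h.symm | inr h => exact Or.inr h.symm⟩

/-- A set of edges that are pairwise non-conflicting is a semistrong matching. -/
lemma semistrong_of_pairwise_nonconf {G : SimpleGraph V} {M : Set (Sym2 V)}
    (hME : M ⊆ G.edgeSet) (h : ∀ e ∈ M, ∀ f ∈ M, e ≠ f → ¬ Conf G e f) :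
    IsSemistrongMatching G M := by
  have hmatch : IsMatchingSet G M := by
    refine ⟨hME, fun e he f hf hef v hv hvf => ?_⟩
    exact h e he f hf hef ⟨v, hv, v, hvf, Or.inl rfl⟩
  refine ⟨hmatch, fun e he => ?_⟩
  induction e using Sym2.ind with
  | _ x y =>
    have hadj : G.Adj x y := (G.mem_edgeSet).1 (hME he)
    refine ⟨x, Sym2.mem_mk_left x y, ⟨⟨s(x,y), he, Sym2.mem_mk_left x y⟩, y, ⟨⟨s(x,y), he, Sym2.mem_mk_right x y⟩, hadj⟩, ?_⟩⟩
    rintro u ⟨⟨f, hf, huf⟩, hxu⟩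
    by_cases hfe : f = s(x,y)
    · subst hfe
      rcases Sym2.mem_iff.1 huf with rfl | rfl
      · exact absurd hxu (G.irrefl)
      · rfl
    · exact absurd ⟨x, Sym2.mem_mk_left x y, u, huf, Or.inr hxu⟩ (h _ he _ hf (Ne.symm hfe))

lemma exists_lt_not_mem {s : Set ℕ} {k : ℕ} (hfin : s.Finite) (hs : s.ncard < k) :
    ∃ i, i < k ∧ i ∉ s := by
  by_contra hc
  push_neg at hc
  have hsub : Set.Iio k ⊆ s := fun i hi => hc i hi
  have h1 : (Set.Iio k).ncard ≤ s.ncard := Set.ncard_le_ncard hsub hfin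
  have hk : (Set.Iio k).ncard = k := by
    have : (Set.Iio k) = ↑(Finset.range k) := by ext i; simp
    rw [this, Set.ncard_coe_finset, Finset.card_range]
  omega

end Aux

section Greedy

variable {n : ℕ}

/-- Edges conflicting with `e` (distance at most 1 in the line graph). -/
def confSet (G : SimpleGraph V) (e : Sym2 V) : Set (Sym2 V) :=
  {f | f ∈ G.edgeSet ∧ f ≠ e ∧ Conf G e f}

lemma exists_greedy_coloring (G : SimpleGraph (Fin n)) {k : ℕ}
    (hconf : ∀ e ∈ G.edgeSet, (confSet G e).ncard < k) :
    ∀ S : Finset (Sym2 (Fin n)), ↑S ⊆ G.edgeSet →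
      ∃ c : Sym2 (Fin n) → ℕ, (∀ e ∈ S, c e < k) ∧
        (∀ e ∈ S, ∀ f ∈ S, e ≠ f → Conf G e f → c e ≠ c f) := by
  intro S
  induction S using Finset.induction_on with
  | empty => exact fun _ => ⟨fun _ => 0, by simp, by simp⟩
  | @insert e S0 henotin ih =>
    intro hsub
    have hS0 : ↑S0 ⊆ G.edgeSet := fun f hf => hsub (by simp [hf])
    have heE : e ∈ G.edgeSet := hsub (by simp)
    obtain ⟨c, hc1, hc2⟩ := ih hS0
    set used : Set ℕ := {i | ∃ f ∈ S0, Conf G e f ∧ c f = i} with hused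
    have husub : used ⊆ c '' confSet G e := by
      rintro i ⟨f, hf, hcf, rfl⟩
      exact ⟨f, ⟨hS0 hf, fun hfe : f = e => henotin (hfe ▸ hf), hcf⟩, rfl⟩
    have hufin : used.Finite := Set.Finite.subset ((Set.toFinite _).image c) husub
    have hucard : used.ncard < k := by
      calc used.ncard ≤ (c '' confSet G e).ncard := Set.ncard_le_ncard husub ((Set.toFinite _).image c)
        _ ≤ (confSet G e).ncard := Set.ncard_image_le (Set.toFinite _)
        _ < k := hconf e heE
    obtain ⟨i0, hi0k, hi0⟩ := exists_lt_not_mem hufin hucard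
    refine ⟨Function.update c e i0, ?_, ?_⟩
    · intro f hf
      have hne : ∀ g ∈ S0, g ≠ e := fun g hg (hge : g = e) => henotin (hge ▸ hg)
      rcases Finset.mem_insert.1 hf with rfl | hf
      · simpa using hi0k
      · rw [Function.update_of_ne (hne f hf)]; exact hc1 f hf
    · intro f hf g hg hfg hcfg
      by_cases hfe : f = e
      · have hgS : g ∈ S0 := by
          rcases Finset.mem_insert.1 hg with h | h
          · exact absurd (h.trans hfe.symm).symm hfg
          · exact h
        rw [hfe, Function.update_self, Function.update_of_ne
          (fun hge : g = e => henotin (hge ▸ hgS))]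
        exact fun h => hi0 ⟨g, hgS, hfe ▸ hcfg, h.symm⟩
      · have hfS : f ∈ S0 := by
          rcases Finset.mem_insert.1 hf with h | h
          · exact absurd h hfe
          · exact h
        by_cases hge : g = e
        · rw [hge, Function.update_self, Function.update_of_ne hfe]
          exact fun h => hi0 ⟨f, hfS, hge ▸ hcfg.symm, h⟩
        · have hgS : g ∈ S0 := by
            rcases Finset.mem_insert.1 hg with h | h
            · exact absurd h hge
            · exact h
          rw [Function.update_of_ne hfe, Function.update_of_ne hge]
          exact hc2 f hfS g hgS hfg hcfg

lemma exists_coloring_of_conf (G : SimpleGraph (Fin n)) {k : ℕ}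
    (hconf : ∀ e ∈ G.edgeSet, (confSet G e).ncard < k) :
    ∃ c, IsPColoring G IsSemistrongMatching c k := by
  obtain ⟨c, hc1, hc2⟩ := exists_greedy_coloring G hconf (Set.toFinite G.edgeSet).toFinset
    (by simp)
  refine ⟨c, fun e heE => hc1 e (by simpa using heE), fun i => ?_⟩
  apply semistrong_of_pairwise_nonconf (fun f hf => hf.1)
  rintro e ⟨heE, hei⟩ f ⟨hfE, hfi⟩ hef hcf
  exact hc2 e (by simpa using heE) f (by simpa using hfE) hef hcf (by rw [hei, hfi])

lemma ssIndex_le_of_conf (G : SimpleGraph (Fin n)) {k : ℕ}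
    (hconf : ∀ e ∈ G.edgeSet, (confSet G e).ncard < k) : ssIndex G ≤ k :=
  Nat.sInf_le (exists_coloring_of_conf G hconf)

lemma exists_trivial_coloring (G : SimpleGraph (Fin n)) :
    ∃ c, IsPColoring G IsSemistrongMatching c (Fintype.card (Sym2 (Fin n)) + 1) := by
  apply exists_coloring_of_conf
  intro e _
  have : (confSet G e).ncard ≤ Fintype.card (Sym2 (Fin n)) := by
    rw [← Nat.card_eq_fintype_card, ← Set.ncard_univ]
    exact Set.ncard_le_ncard (Set.subset_univ _)
  omega

lemma ssColoring_mono {G : SimpleGraph V} {c : Sym2 V → ℕ} {k k' : ℕ}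
    (h : IsPColoring G IsSemistrongMatching c k) (hkk : k ≤ k') :
    IsPColoring G IsSemistrongMatching c k' :=
  ⟨fun e he => lt_of_lt_of_le (h.1 e he) hkk, h.2⟩

lemma exists_ssColoring_of_le (G : SimpleGraph (Fin n)) {k : ℕ} (h : ssIndex G ≤ k) :
    ∃ c, IsPColoring G IsSemistrongMatching c k := by
  have hne : {k | ∃ c, IsPColoring G IsSemistrongMatching c k}.Nonempty :=
    ⟨_, exists_trivial_coloring G⟩
  obtain ⟨c, hc⟩ := Nat.sInf_mem hne
  exact ⟨c, ssColoring_mono hc h⟩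

end Greedy

section Comap

variable {f : V → W} {G : SimpleGraph W}

lemma comap_neighborSet (x : V) :
    (G.comap f).neighborSet x = f ⁻¹' (G.neighborSet (f x)) := rfl

lemma comap_edge_mem {e : Sym2 V} (he : e ∈ (G.comap f).edgeSet) :
    Sym2.map f e ∈ G.edgeSet := by
  induction e using Sym2.ind with
  | _ x y => exact (G.mem_edgeSet).2 ((G.comap f).mem_edgeSet.1 he)

lemma cov_image (M : Set (Sym2 V)) : cov (Sym2.map f '' M) = f '' cov M := by
  ext x
  constructor
  · rintro ⟨e, ⟨e0, he0, rfl⟩, hx⟩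
    obtain ⟨a, ha, rfl⟩ := Sym2.mem_map.1 hx
    exact ⟨a, ⟨e0, he0, ha⟩, rfl⟩
  · rintro ⟨a, ⟨e0, he0, ha⟩, rfl⟩
    exact ⟨Sym2.map f e0, ⟨e0, he0, rfl⟩, Sym2.mem_map.2 ⟨a, ha, rfl⟩⟩

/-- Push a semistrong matching forward along an induced embedding. -/
lemma image_semistrong (hf : Function.Injective f) {M : Set (Sym2 V)}
    (hM : IsSemistrongMatching (G.comap f) M) :
    IsSemistrongMatching G (Sym2.map f '' M) := by
  obtain ⟨⟨hME, hMd⟩, hMp⟩ := hM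
  have hinj := Sym2.map.injective hf
  constructor
  · constructor
    · rintro e ⟨e0, he0, rfl⟩
      exact comap_edge_mem (hME he0)
    · rintro e ⟨e0, he0, rfl⟩ e' ⟨e0', he0', rfl⟩ hne x hx hx'
      obtain ⟨a, ha, rfl⟩ := Sym2.mem_map.1 hx
      obtain ⟨a', ha', haa⟩ := Sym2.mem_map.1 hx'
      have ha2 : a ∈ e0' := by rwa [hf haa] at ha'
      exact hMd e0 he0 e0' he0' (fun h => hne (by rw [h])) a ha ha2
  · rintro e ⟨e0, he0, rfl⟩
    obtain ⟨p, hp, hpcov, q, ⟨hqcov, hq⟩, huniq⟩ := hMp e0 he0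
    refine ⟨f p, Sym2.mem_map.2 ⟨p, hp, rfl⟩, ?_, f q, ⟨?_, hq⟩, ?_⟩
    · rw [cov_image]; exact ⟨p, hpcov, rfl⟩
    · rw [cov_image]; exact ⟨q, hqcov, rfl⟩
    · rintro y ⟨hycov, hy⟩
      rw [cov_image] at hycov
      obtain ⟨b, hb, rfl⟩ := hycov
      rw [huniq b ⟨hb, hy⟩]

/-- Pull back a subset of a semistrong matching along an induced embedding. -/
lemma semistrong_pullback (hf : Function.Injective f) {M : Set (Sym2 W)}
    (hM : IsSemistrongMatching G M) {M' : Set (Sym2 V)}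
    (hM'E : M' ⊆ (G.comap f).edgeSet) (hsub : Sym2.map f '' M' ⊆ M) :
    IsSemistrongMatching (G.comap f) M' := by
  obtain ⟨⟨hME, hMd⟩, hMp⟩ := hM
  have hcov : ∀ x ∈ cov M', f x ∈ cov M := by
    rintro x ⟨e, he, hx⟩
    exact ⟨Sym2.map f e, hsub ⟨e, he, rfl⟩, Sym2.mem_map.2 ⟨x, hx, rfl⟩⟩
  constructor
  · refine ⟨hM'E, ?_⟩
    intro e he e' he' hne x hx hx'
    refine hMd _ (hsub ⟨e, he, rfl⟩) _ (hsub ⟨e', he', rfl⟩)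
      (fun h => hne (Sym2.map.injective hf h)) (f x)
      (Sym2.mem_map.2 ⟨x, hx, rfl⟩) (Sym2.mem_map.2 ⟨x, hx', rfl⟩)
  · intro e he
    induction e using Sym2.ind with
    | _ x y =>
      have hadjH : (G.comap f).Adj x y := (G.comap f).mem_edgeSet.1 (hM'E he)
      obtain ⟨p, hp, hpcov, q, ⟨hqcov, hq⟩, huniq⟩ := hMp _ (hsub ⟨_, he, rfl⟩)
      obtain ⟨a, ha, rfl⟩ := Sym2.mem_map.1 hp
      -- let b be the other endpoint of s(x,y) from a's viewpoint
      have hab : (a = x ∧ (G.comap f).Adj a y) ∨ (a = y ∧ (G.comap f).Adj a x) := by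
        rcases Sym2.mem_iff.1 ha with rfl | rfl
        · exact Or.inl ⟨rfl, hadjH⟩
        · exact Or.inr ⟨rfl, hadjH.symm⟩
      obtain ⟨b, hb, hadj⟩ : ∃ b, b ∈ s(x,y) ∧ (G.comap f).Adj a b := by
        rcases hab with ⟨hax, h⟩ | ⟨hay, h⟩
        · exact ⟨y, Sym2.mem_mk_right x y, h⟩
        · exact ⟨x, Sym2.mem_mk_left x y, h⟩
      have hbq : f b = q := huniq (f b) ⟨hcov b ⟨_, he, hb⟩, hadj⟩
      refine ⟨a, ha, ⟨⟨_, he, ha⟩, b, ⟨⟨_, he, hb⟩, hadj⟩, ?_⟩⟩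
      rintro y' ⟨hy'cov, hy'⟩
      exact hf ((huniq (f y') ⟨hcov y' hy'cov, hy'⟩).trans hbq.symm)

lemma natDeg_comap [Finite W] (hf : Function.Injective f) (x : V) :
    natDeg (G.comap f) x = ((G.neighborSet (f x)) ∩ Set.range f).ncard := by
  rw [natDeg_eq_ncard, comap_neighborSet, ← Set.ncard_image_of_injective _ hf,
    Set.image_preimage_eq_inter_range]

lemma natDeg_comap_le [Finite W] (hf : Function.Injective f) (x : V) :
    natDeg (G.comap f) x ≤ natDeg G (f x) := by
  rw [natDeg_comap hf]
  exact Set.ncard_le_ncard Set.inter_subset_left (Set.toFinite _)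

end Comap

section ComapFin

variable {a b : ℕ} {f : Fin a → Fin b} {G : SimpleGraph (Fin b)}

lemma MadLT_comap (hf : Function.Injective f) {q : ℚ} (h : MadLT G q) :
    MadLT (G.comap f) q := by
  intro s hs hsne
  have h2 := h (f '' s) (hs.image f) (hsne.image f)
  have hcard : (f '' s).ncard = s.ncard := Set.ncard_image_of_injective s hf
  have hEle : {e ∈ (G.comap f).edgeSet | ∀ v ∈ e, v ∈ s}.ncard ≤
      {e ∈ G.edgeSet | ∀ v ∈ e, v ∈ f '' s}.ncard := by
    rw [← Set.ncard_image_of_injective _ (Sym2.map.injective hf)]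
    apply Set.ncard_le_ncard _ (Set.toFinite _)
    rintro e ⟨e0, ⟨he0, hv⟩, rfl⟩
    refine ⟨comap_edge_mem he0, ?_⟩
    rintro v hv'
    obtain ⟨w, hw, rfl⟩ := Sym2.mem_map.1 hv'
    exact ⟨w, hv w hw, rfl⟩
  calc (2 : ℚ) * {e ∈ (G.comap f).edgeSet | ∀ v ∈ e, v ∈ s}.ncard
      ≤ 2 * {e ∈ G.edgeSet | ∀ v ∈ e, v ∈ f '' s}.ncard := by
        have := (Nat.cast_le (α := ℚ)).2 hEle
        linarith
    _ < q * (f '' s).ncard := h2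
    _ = q * s.ncard := by rw [hcard]

lemma ssIndex_comap_le (hf : Function.Injective f) :
    ssIndex (G.comap f) ≤ ssIndex G := by
  obtain ⟨c, hc1, hc2⟩ := exists_ssColoring_of_le G le_rfl
  apply Nat.sInf_le
  refine ⟨fun e => c (Sym2.map f e), fun e he => hc1 _ (comap_edge_mem he), fun i => ?_⟩
  refine semistrong_pullback hf (hc2 i) (fun e he => he.1) ?_
  rintro e ⟨e0, ⟨he0, hce⟩, rfl⟩
  exact ⟨comap_edge_mem he0, hce⟩

lemma ncard_incidenceSet (G : SimpleGraph (Fin b)) (u : Fin b) :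
    (G.incidenceSet u).ncard = natDeg G u := by
  rw [natDeg_eq_ncard, ← Nat.card_coe_set_eq, ← Nat.card_coe_set_eq]
  exact Nat.card_congr (G.incidenceSetEquivNeighborSet u)

end ComapFin

section Del

variable {m : ℕ} {G : SimpleGraph (Fin (m+1))} {u : Fin (m+1)}

lemma mem_range_succAbove {x : Fin (m+1)} (hx : x ≠ u) : x ∈ Set.range u.succAbove := by
  rw [Fin.range_succAbove]; exact hx

lemma image_edgeSet_del (G : SimpleGraph (Fin (m+1))) (u : Fin (m+1)) :
    Sym2.map u.succAbove '' (G.comap u.succAbove).edgeSet =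
      G.edgeSet \ G.incidenceSet u := by
  ext e
  constructor
  · rintro ⟨e0, he0, rfl⟩
    refine ⟨comap_edge_mem he0, fun hin => ?_⟩
    have hu : u ∈ Sym2.map u.succAbove e0 := hin.2
    obtain ⟨w, _, hw⟩ := Sym2.mem_map.1 hu
    have : u ∈ Set.range u.succAbove := ⟨w, hw⟩
    rw [Fin.range_succAbove] at this
    exact this rfl
  · rintro ⟨heE, hninc⟩
    induction e using Sym2.ind with
    | _ x y =>
      have hxu : x ≠ u := fun h => hninc ⟨heE, h ▸ Sym2.mem_mk_left x y⟩
      have hyu : y ≠ u := fun h => hninc ⟨heE, h ▸ Sym2.mem_mk_right x y⟩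
      obtain ⟨x0, hx0⟩ := Fin.exists_succAbove_eq hxu
      obtain ⟨y0, hy0⟩ := Fin.exists_succAbove_eq hyu
      refine ⟨s(x0, y0), ?_, by rw [Sym2.map_pair_eq, hx0, hy0]⟩
      rw [SimpleGraph.mem_edgeSet]
      show G.Adj (u.succAbove x0) (u.succAbove y0)
      rw [hx0, hy0]
      exact (G.mem_edgeSet).1 heE

lemma ncard_edgeSet_del (G : SimpleGraph (Fin (m+1))) (u : Fin (m+1)) :
    ((G.comap u.succAbove).edgeSet).ncard + natDeg G u = G.edgeSet.ncard := by
  have h1 : ((G.comap u.succAbove).edgeSet).ncard = (G.edgeSet \ G.incidenceSet u).ncard := by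
    rw [← image_edgeSet_del G u,
      Set.ncard_image_of_injective _ (Sym2.map.injective Fin.succAbove_right_injective)]
  rw [h1, ← ncard_incidenceSet G u]
  exact Set.ncard_diff_add_ncard_of_subset (G.incidenceSet_subset u) (Set.toFinite _)

lemma natDeg_del (G : SimpleGraph (Fin (m+1))) (u : Fin (m+1)) (x : Fin m) :
    natDeg (G.comap u.succAbove) x = (G.neighborSet (u.succAbove x) \ {u}).ncard := by
  rw [natDeg_comap Fin.succAbove_right_injective, Fin.range_succAbove]
  rfl

lemma natDeg_del_ge (G : SimpleGraph (Fin (m+1))) (u : Fin (m+1)) (x : Fin m) :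
    natDeg G (u.succAbove x) ≤ natDeg (G.comap u.succAbove) x + 1 := by
  rw [natDeg_del, natDeg_eq_ncard]
  have h1 : G.neighborSet (u.succAbove x) ⊆ (G.neighborSet (u.succAbove x) \ {u}) ∪ {u} := by
    intro z hz
    by_cases hzu : z = u
    · exact Or.inr hzu
    · exact Or.inl ⟨hz, hzu⟩
  calc (G.neighborSet (u.succAbove x)).ncard
      ≤ ((G.neighborSet (u.succAbove x) \ {u}) ∪ {u}).ncard :=
        Set.ncard_le_ncard h1 (Set.toFinite _)
    _ ≤ (G.neighborSet (u.succAbove x) \ {u}).ncard + ({u} : Set (Fin (m+1))).ncard :=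
        Set.ncard_union_le _ _
    _ = (G.neighborSet (u.succAbove x) \ {u}).ncard + 1 := by rw [Set.ncard_singleton]

end Del

section DelConn

variable {m : ℕ}

lemma del_connected {G : SimpleGraph (Fin (m+1))} {u v : Fin (m+1)}
    (hconn : G.Connected) (hu : G.neighborSet u = {v}) :
    (G.comap u.succAbove).Connected := by
  have hadjuv : G.Adj u v := by
    have : v ∈ G.neighborSet u := by rw [hu]; rfl
    exact this
  have huv : u ≠ v := G.ne_of_adj hadjuv
  obtain ⟨v0, hv0⟩ := Fin.exists_succAbove_eq (Ne.symm huv)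
  set σ := u.succAbove with hσ
  have hinj : Function.Injective σ := Fin.succAbove_right_injective
  let ρ : Fin (m+1) → Fin m := fun x => if h : ∃ y, σ y = x then h.choose else v0
  have hρ : ∀ x, x ≠ u → σ (ρ x) = x := by
    intro x hx
    have h : ∃ y, σ y = x := Fin.exists_succAbove_eq hx
    simp only [ρ, dif_pos h]
    exact h.choose_spec
  have hmemN : ∀ x, G.Adj x u → x = v := by
    intro x hx
    have : x ∈ G.neighborSet u := hx.symm
    rwa [hu] at this
  have key : ∀ L : ℕ, ∀ x y : Fin (m+1), ∀ p : G.Walk x y, p.length = L →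
      x ≠ u → y ≠ u → (G.comap σ).Reachable (ρ x) (ρ y) := by
    intro L
    induction L using Nat.strong_induction_on with
    | _ L ih =>
      intro x y p hL hx hy
      cases p with
      | nil => exact SimpleGraph.Reachable.refl _
      | @cons _ x1 _ h q =>
        by_cases hx1 : x1 = u
        · have hxv : x = v := hmemN x (hx1 ▸ h)
          cases q with
          | nil => exact absurd hx1 hy
          | @cons _ x2 _ h2 q2 =>
            have hx2v : x2 = v := hmemN x2 (hx1 ▸ h2.symm)
            have hx2u : x2 ≠ u := by rw [hx2v]; exact Ne.symm huv
            have hxx2 : x = x2 := by rw [hxv, hx2v]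
            have hlen : q2.length < L := by
              simp only [SimpleGraph.Walk.length_cons] at hL
              omega
            have := ih q2.length hlen x2 y q2 rfl hx2u hy
            rwa [hxx2]
        · have hadjH : (G.comap σ).Adj (ρ x) (ρ x1) := by
            show G.Adj (σ (ρ x)) (σ (ρ x1))
            rw [hρ x hx, hρ x1 hx1]
            exact h
          have hlen : q.length < L := by
            simp only [SimpleGraph.Walk.length_cons] at hL
            omega
          exact hadjH.reachable.trans (ih q.length hlen x1 y q rfl hx1 hy)
  have hne : Nonempty (Fin m) := ⟨v0⟩
  rw [SimpleGraph.connected_iff]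
  refine ⟨?_, hne⟩
  · intro a bb
    obtain ⟨p⟩ := hconn.preconnected (σ a) (σ bb)
    have hau : σ a ≠ u := by
      intro hc
      have : σ a ∈ Set.range σ := ⟨a, rfl⟩
      rw [hσ, Fin.range_succAbove] at this
      exact this hc
    have hbu : σ bb ≠ u := by
      intro hc
      have : σ bb ∈ Set.range σ := ⟨bb, rfl⟩
      rw [hσ, Fin.range_succAbove] at this
      exact this hc
    have := key p.length (σ a) (σ bb) p rfl hau hbu
    rwa [show ρ (σ a) = a from hinj (hρ _ hau), show ρ (σ bb) = bb from hinj (hρ _ hbu)] at this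

end DelConn

section Extension

variable {m : ℕ}

lemma cov_insert (e : Sym2 V) (M : Set (Sym2 V)) :
    cov (insert e M) = {z | z ∈ e} ∪ cov M := by
  ext x
  constructor
  · rintro ⟨f, hf, hx⟩
    rcases Set.mem_insert_iff.1 hf with rfl | hf
    · exact Or.inl hx
    · exact Or.inr ⟨f, hf, hx⟩
  · rintro (hx | ⟨f, hf, hx⟩)
    · exact ⟨e, Set.mem_insert e M, hx⟩
    · exact ⟨f, Set.mem_insert_of_mem e hf, hx⟩

lemma not_mem_of_leaf {G : SimpleGraph (Fin (m+1))} {u v : Fin (m+1)}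
    (hu : G.neighborSet u = {v}) {e : Sym2 (Fin (m+1))} (he : e ∈ G.edgeSet)
    (hne : e ≠ s(u, v)) : u ∉ e := by
  intro hmem
  have hadj : G.Adj u (Sym2.Mem.other hmem) := by
    have := Sym2.other_spec hmem
    rw [← this] at he
    exact (G.mem_edgeSet).1 he
  have : Sym2.Mem.other hmem ∈ G.neighborSet u := hadj
  rw [hu, Set.mem_singleton_iff] at this
  apply hne
  rw [← Sym2.other_spec hmem, this]

lemma extension {G : SimpleGraph (Fin (m+1))} {u v w : Fin (m+1)} {k : ℕ}
    (hu : G.neighborSet u = {v}) (hwu : w ≠ u)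
    (hw : ∀ x, G.Adj v x → x = u ∨ x = w ∨ G.neighborSet x = {v})
    (hk : natDeg G v + natDeg G w ≤ k)
    (hH : ssIndex (G.comap u.succAbove) ≤ k) :
    ssIndex G ≤ k := by
  set σ := u.succAbove with hσdef
  set H := G.comap σ with hHdef
  have hadjuv : G.Adj u v := by
    have : v ∈ G.neighborSet u := by rw [hu]; rfl
    exact this
  have huv : u ≠ v := G.ne_of_adj hadjuv
  have hinj : Function.Injective σ := Fin.succAbove_right_injective
  obtain ⟨v0, hv0⟩ := Fin.exists_succAbove_eq (Ne.symm huv)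
  obtain ⟨w0, hw0⟩ := Fin.exists_succAbove_eq hwu
  obtain ⟨c, hc1, hc2⟩ := exists_ssColoring_of_le H hH
  -- the forbidden colors
  set Forb : Set ℕ := {i | ∃ f ∈ H.edgeSet, c f = i ∧ (v0 ∈ f ∨ w0 ∈ f)} with hForb
  have hFsub : Forb ⊆ c '' (H.incidenceSet v0 ∪ H.incidenceSet w0) := by
    rintro i ⟨f, hfE, rfl, hmem⟩
    rcases hmem with h | h
    · exact ⟨f, Or.inl ⟨hfE, h⟩, rfl⟩
    · exact ⟨f, Or.inr ⟨hfE, h⟩, rfl⟩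
  have hdegv : natDeg H v0 + 1 = natDeg G v := by
    have h1 : natDeg H v0 = (G.neighborSet v \ {u}).ncard := by
      rw [hHdef, natDeg_del, hv0]
    have h2 : u ∈ G.neighborSet v := hadjuv.symm
    rw [h1, natDeg_eq_ncard, Set.ncard_diff_singleton_of_mem h2]
    have : 0 < (G.neighborSet v).ncard := (Set.ncard_pos (Set.toFinite _)).2 ⟨u, h2⟩
    omega
  have hdegw : natDeg H w0 ≤ natDeg G w := by
    have := natDeg_comap_le (G := G) (f := σ) hinj w0
    rwa [show σ w0 = w from hw0] at this
  have hFcard : Forb.ncard < k := by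
    have h1 : Forb.ncard ≤ (H.incidenceSet v0 ∪ H.incidenceSet w0).ncard := by
      calc Forb.ncard ≤ (c '' (H.incidenceSet v0 ∪ H.incidenceSet w0)).ncard :=
            Set.ncard_le_ncard hFsub ((Set.toFinite _).image c)
        _ ≤ _ := Set.ncard_image_le (Set.toFinite _)
    have h2 : (H.incidenceSet v0 ∪ H.incidenceSet w0).ncard ≤
        natDeg H v0 + natDeg H w0 := by
      calc (H.incidenceSet v0 ∪ H.incidenceSet w0).ncard
          ≤ (H.incidenceSet v0).ncard + (H.incidenceSet w0).ncard := Set.ncard_union_le _ _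
        _ = natDeg H v0 + natDeg H w0 := by rw [ncard_incidenceSet, ncard_incidenceSet]
    omega
  have hFfin : Forb.Finite := Set.Finite.subset ((Set.toFinite _).image c) hFsub
  obtain ⟨i0, hi0k, hi0F⟩ := exists_lt_not_mem hFfin hFcard
  -- the partial inverse of σ
  let ρ : Fin (m+1) → Fin m := fun x => if h : ∃ y, σ y = x then h.choose else v0
  have hρ : ∀ x, x ≠ u → σ (ρ x) = x := by
    intro x hx
    have h : ∃ y, σ y = x := Fin.exists_succAbove_eq hx
    simp only [ρ, dif_pos h]
    exact h.choose_spec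
  have hρσ : ∀ y, ρ (σ y) = y := by
    intro y
    apply hinj
    apply hρ
    intro hc
    have : σ y ∈ Set.range σ := ⟨y, rfl⟩
    rw [hσdef, Fin.range_succAbove] at this
    exact this hc
  have hmapback : ∀ f : Sym2 (Fin m), Sym2.map ρ (Sym2.map σ f) = f := by
    intro f
    rw [Sym2.map_map]
    have : ρ ∘ σ = id := funext hρσ
    rw [this, Sym2.map_id]
    rfl
  -- the new coloring
  set c' : Sym2 (Fin (m+1)) → ℕ := fun e => if e = s(u, v) then i0 else c (Sym2.map ρ e)
    with hc'def
  have hpre : ∀ e ∈ G.edgeSet, e ≠ s(u, v) →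
      ∃ f ∈ H.edgeSet, Sym2.map σ f = e ∧ c' e = c f := by
    intro e heE hne
    have hnu : u ∉ e := not_mem_of_leaf hu heE hne
    have : e ∈ Sym2.map σ '' H.edgeSet := by
      rw [hHdef, hσdef, image_edgeSet_del]
      exact ⟨heE, fun hinc => hnu hinc.2⟩
    obtain ⟨f, hfE, rfl⟩ := this
    refine ⟨f, hfE, rfl, ?_⟩
    simp only [hc'def, if_neg hne, hmapback]
  apply Nat.sInf_le
  refine ⟨c', ?_, ?_⟩
  · intro e heE
    by_cases hne : e = s(u, v)
    · simp only [hc'def, if_pos hne]; exact hi0k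
    · obtain ⟨f, hfE, _, hce⟩ := hpre e heE hne
      rw [hce]; exact hc1 f hfE
  · intro i
    set M' : Set (Sym2 (Fin m)) := {f | f ∈ H.edgeSet ∧ c f = i} with hM'
    have hss' : IsSemistrongMatching H M' := hc2 i
    set N' : Set (Sym2 (Fin (m+1))) := Sym2.map σ '' M' with hN'
    have hssN' : IsSemistrongMatching G N' := image_semistrong hinj hss'
    by_cases hii : i = i0
    · -- class containing the new edge
      subst hii
      have hM : {e | e ∈ G.edgeSet ∧ c' e = i} = insert s(u, v) N' := by
        ext e
        constructor
        · rintro ⟨heE, hce⟩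
          by_cases hne : e = s(u, v)
          · exact hne ▸ Set.mem_insert _ _
          · obtain ⟨f, hfE, hmap, hce'⟩ := hpre e heE hne
            exact Set.mem_insert_of_mem _ ⟨f, ⟨hfE, by rw [← hce', hce]⟩, hmap⟩
        · rintro (rfl | ⟨f, ⟨hfE, hcf⟩, rfl⟩)
          · exact ⟨(G.mem_edgeSet).2 hadjuv, by simp [hc'def]⟩
          · have hne : Sym2.map σ f ≠ s(u, v) := by
              intro hc
              have : u ∈ Sym2.map σ f := hc ▸ Sym2.mem_mk_left u v
              obtain ⟨z, _, hz⟩ := Sym2.mem_map.1 this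
              have : u ∈ Set.range σ := ⟨z, hz⟩
              rw [hσdef, Fin.range_succAbove] at this
              exact this rfl
            refine ⟨comap_edge_mem hfE, ?_⟩
            simp only [hc'def, if_neg hne, hmapback, hcf]
      rw [hM]
      -- facts about N'
      have hfact1 : ∀ f ∈ M', v0 ∉ f ∧ w0 ∉ f := by
        intro f hf
        constructor <;> intro hmem
        · exact hi0F ⟨f, hf.1, hf.2, Or.inl hmem⟩
        · exact hi0F ⟨f, hf.1, hf.2, Or.inr hmem⟩
      have hcovN' : ∀ x, x ∈ cov N' → x ≠ u ∧ x ≠ v ∧ x ≠ w := by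
        intro x hx
        rw [hN', cov_image] at hx
        obtain ⟨x0, hx0cov, rfl⟩ := hx
        obtain ⟨f, hf, hx0f⟩ := hx0cov
        refine ⟨?_, ?_, ?_⟩
        · intro hc
          have : σ x0 ∈ Set.range σ := ⟨x0, rfl⟩
          rw [hσdef, Fin.range_succAbove] at this
          exact this hc
        · intro hc
          have hx0v : x0 = v0 := hinj (hc.trans hv0.symm)
          exact (hfact1 f hf).1 (hx0v ▸ hx0f)
        · intro hc
          have hx0w : x0 = w0 := hinj (hc.trans hw0.symm)
          exact (hfact1 f hf).2 (hx0w ▸ hx0f)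
      have hvnotcov : ∀ e ∈ N', ∀ z, z ∈ e → z ≠ u ∧ z ≠ v ∧ z ≠ w := by
        intro e he z hz
        exact hcovN' z ⟨e, he, hz⟩
      obtain ⟨⟨hN'E, hN'd⟩, hN'p⟩ := hssN'
      constructor
      · constructor
        · rintro e (rfl | he)
          · exact (G.mem_edgeSet).2 hadjuv
          · exact hN'E he
        · rintro e (rfl | he) f (rfl | hf) hne z hz hzf
          · exact hne rfl
          · rcases Sym2.mem_iff.1 hz with rfl | rfl
            · exact (hvnotcov f hf z hzf).1 rfl
            · exact (hvnotcov f hf z hzf).2.1 rfl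
          · rcases Sym2.mem_iff.1 hzf with rfl | rfl
            · exact (hvnotcov e he z hz).1 rfl
            · exact (hvnotcov e he z hz).2.1 rfl
          · exact hN'd e he f hf hne z hz hzf
      · rintro e (rfl | he)
        · -- the pendant vertex of the new edge is u
          refine ⟨u, Sym2.mem_mk_left u v, ⟨s(u,v), Set.mem_insert _ _, Sym2.mem_mk_left u v⟩,
            v, ⟨⟨s(u,v), Set.mem_insert _ _, Sym2.mem_mk_right u v⟩, hadjuv⟩, ?_⟩
          rintro y ⟨_, hy⟩
          have : y ∈ G.neighborSet u := hy
          rwa [hu, Set.mem_singleton_iff] at this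
        · obtain ⟨p, hp, hpcov, q, ⟨hqcov, hq⟩, huniq⟩ := hN'p e he
          refine ⟨p, hp, ?_, q, ⟨?_, hq⟩, ?_⟩
          · rw [cov_insert]
            exact Or.inr hpcov
          · rw [cov_insert]
            exact Or.inr hqcov
          · rintro y ⟨hycov, hy⟩
            rw [cov_insert] at hycov
            rcases hycov with hymem | hycov
            · exfalso
              rcases Sym2.mem_iff.1 hymem with hyu | hyv
              · -- y = u : then p ∈ N(u) = {v}, impossible
                have hpn : p ∈ G.neighborSet u := by rw [← hyu]; exact hy.symm
                rw [hu, Set.mem_singleton_iff] at hpn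
                exact (hcovN' p hpcov).2.1 hpn
              · -- y = v : then p is u, w or a leaf
                have hadjvp : G.Adj v p := by rw [← hyv]; exact hy.symm
                rcases hw p hadjvp with hpu | hpw | hleaf
                · exact (hcovN' p hpcov).1 hpu
                · exact (hcovN' p hpcov).2.2 hpw
                · have hqn : q ∈ G.neighborSet p := hq
                  rw [hleaf, Set.mem_singleton_iff] at hqn
                  exact (hcovN' q hqcov).2.1 hqn
            · exact huniq y ⟨hycov, hy⟩
    · -- ordinary class
      have hM : {e | e ∈ G.edgeSet ∧ c' e = i} = N' := by
        ext e
        constructor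
        · rintro ⟨heE, hce⟩
          have hne : e ≠ s(u, v) := by
            intro hc
            apply hii
            rw [← hce, hc]
            simp [hc'def]
          obtain ⟨f, hfE, hmap, hce'⟩ := hpre e heE hne
          exact ⟨f, ⟨hfE, by rw [← hce', hce]⟩, hmap⟩
        · rintro ⟨f, ⟨hfE, hcf⟩, rfl⟩
          have hne : Sym2.map σ f ≠ s(u, v) := by
            intro hc
            have : u ∈ Sym2.map σ f := hc ▸ Sym2.mem_mk_left u v
            obtain ⟨z, _, hz⟩ := Sym2.mem_map.1 this
            have : u ∈ Set.range σ := ⟨z, hz⟩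
            rw [hσdef, Fin.range_succAbove] at this
            exact this rfl
          refine ⟨comap_edge_mem hfE, ?_⟩
          simp only [hc'def, if_neg hne, hmapback, hcf]
      rw [hM]
      exact hssN'

end Extension

section AddLeaf

variable {m : ℕ}

/-- Add a new pendant vertex attached to `z`. -/
def addLeaf (K : SimpleGraph (Fin m)) (z : Fin m) : SimpleGraph (Fin (m+1)) where
  Adj x y := (∃ a b, x = a.castSucc ∧ y = b.castSucc ∧ K.Adj a b) ∨
    (x = z.castSucc ∧ y = Fin.last m) ∨ (x = Fin.last m ∧ y = z.castSucc)
  symm := by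
    constructor
    rintro x y (⟨a, b, rfl, rfl, h⟩ | ⟨rfl, rfl⟩ | ⟨rfl, rfl⟩)
    · exact Or.inl ⟨b, a, rfl, rfl, h.symm⟩
    · exact Or.inr (Or.inr ⟨rfl, rfl⟩)
    · exact Or.inr (Or.inl ⟨rfl, rfl⟩)
  loopless := by
    constructor
    rintro x (⟨a, b, rfl, heq, h⟩ | ⟨rfl, heq⟩ | ⟨rfl, heq⟩)
    · exact K.loopless.irrefl a (by rwa [← Fin.castSucc_inj.1 heq] at h)
    · exact (Fin.castSucc_lt_last z).ne heq
    · exact (Fin.castSucc_lt_last z).ne heq.symm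

variable {K : SimpleGraph (Fin m)} {z : Fin m}

lemma addLeaf_adj_cast {a b : Fin m} : (addLeaf K z).Adj a.castSucc b.castSucc ↔ K.Adj a b := by
  constructor
  · rintro (⟨a', b', ha, hb, h⟩ | ⟨_, hb⟩ | ⟨ha, _⟩)
    · rwa [← Fin.castSucc_inj.1 ha, ← Fin.castSucc_inj.1 hb] at h
    · exact absurd hb (Fin.castSucc_lt_last b).ne
    · exact absurd ha.symm (Fin.castSucc_lt_last a).ne'
  · exact fun h => Or.inl ⟨a, b, rfl, rfl, h⟩

lemma addLeaf_adj_last {x : Fin (m+1)} : (addLeaf K z).Adj x (Fin.last m) ↔ x = z.castSucc := by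
  constructor
  · rintro (⟨a, b, _, hb, _⟩ | ⟨hx, _⟩ | ⟨_, hz⟩)
    · exact absurd hb.symm (Fin.castSucc_lt_last b).ne
    · exact hx
    · exact absurd hz.symm (Fin.castSucc_lt_last z).ne
  · rintro rfl
    exact Or.inr (Or.inl ⟨rfl, rfl⟩)

lemma del_addLeaf : (addLeaf K z).comap (Fin.last m).succAbove = K := by
  ext a b
  rw [Fin.succAbove_last]
  exact addLeaf_adj_cast

lemma neighborSet_addLeaf_last : (addLeaf K z).neighborSet (Fin.last m) = {z.castSucc} := by
  ext x
  rw [SimpleGraph.mem_neighborSet, SimpleGraph.adj_comm, addLeaf_adj_last]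
  rfl

lemma natDeg_addLeaf_last : natDeg (addLeaf K z) (Fin.last m) = 1 := by
  rw [natDeg_eq_ncard, neighborSet_addLeaf_last, Set.ncard_singleton]

lemma neighborSet_addLeaf_cast (a : Fin m) :
    (addLeaf K z).neighborSet a.castSucc =
      Fin.castSucc '' K.neighborSet a ∪ (if a = z then {Fin.last m} else ∅) := by
  ext x
  rw [SimpleGraph.mem_neighborSet]
  constructor
  · rintro (⟨a', b', ha, rfl, h⟩ | ⟨ha, rfl⟩ | ⟨ha, _⟩)
    · exact Or.inl ⟨b', by rwa [← Fin.castSucc_inj.1 ha] at h, rfl⟩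
    · have : a = z := Fin.castSucc_inj.1 ha
      rw [if_pos this]
      exact Or.inr rfl
    · exact absurd ha (Fin.castSucc_lt_last a).ne
  · rintro (⟨b, hb, rfl⟩ | hx)
    · exact Or.inl ⟨a, b, rfl, rfl, hb⟩
    · by_cases haz : a = z
      · rw [if_pos haz] at hx
        rw [Set.mem_singleton_iff] at hx
        subst hx
        exact Or.inr (Or.inl ⟨by rw [haz], rfl⟩)
      · rw [if_neg haz] at hx
        exact absurd hx (Set.notMem_empty x)

lemma natDeg_addLeaf_cast (a : Fin m) :
    natDeg (addLeaf K z) a.castSucc = natDeg K a + (if a = z then 1 else 0) := by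
  rw [natDeg_eq_ncard, neighborSet_addLeaf_cast]
  have himg : (Fin.castSucc '' K.neighborSet a).ncard = natDeg K a :=
    Set.ncard_image_of_injective _ (Fin.castSucc_injective m)
  by_cases haz : a = z
  · rw [if_pos haz, if_pos haz]
    rw [Set.ncard_union_eq ?_ (Set.toFinite _) (Set.toFinite _), himg, Set.ncard_singleton]
    rw [Set.disjoint_singleton_right]
    rintro ⟨b, _, hb⟩
    exact (Fin.castSucc_lt_last b).ne hb
  · rw [if_neg haz, if_neg haz, Set.union_empty, himg, Nat.add_zero]

lemma addLeaf_connected (hK : K.Connected) : (addLeaf K z).Connected := by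
  let hom : K →g addLeaf K z := ⟨Fin.castSucc, fun h => Or.inl ⟨_, _, rfl, rfl, h⟩⟩
  rw [SimpleGraph.connected_iff]
  refine ⟨?_, ⟨Fin.last m⟩⟩
  intro x y
  have hreach : ∀ x : Fin (m+1), (addLeaf K z).Reachable x (z.castSucc) := by
    intro x
    by_cases hx : x = Fin.last m
    · subst hx
      exact (SimpleGraph.Adj.reachable (by rw [SimpleGraph.adj_comm, addLeaf_adj_last]))
    · obtain ⟨a, rfl⟩ := Fin.exists_castSucc_eq.2 hx
      exact SimpleGraph.Reachable.map hom (hK.preconnected a z)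
  exact (hreach x).trans (hreach y).symm

lemma ncard_edgeSet_addLeaf :
    (addLeaf K z).edgeSet.ncard = K.edgeSet.ncard + 1 := by
  have h := ncard_edgeSet_del (addLeaf K z) (Fin.last m)
  rw [del_addLeaf, natDeg_addLeaf_last] at h
  omega

lemma MadLT_addLeaf {q : ℚ} (hq : 2 < q) (hK : MadLT K q) : MadLT (addLeaf K z) q := by
  intro s hs hsne
  set s' : Set (Fin m) := Fin.castSucc ⁻¹' s with hs'
  have hq0 : 0 < q := lt_trans (by norm_num) hq
  have hsubE : {e ∈ (addLeaf K z).edgeSet | ∀ v ∈ e, v ∈ s} ⊆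
      Sym2.map Fin.castSucc '' {f ∈ K.edgeSet | ∀ v ∈ f, v ∈ s'} ∪ {s(z.castSucc, Fin.last m)} := by
    rintro e ⟨heE, hev⟩
    induction e using Sym2.ind with
    | _ x y =>
      rcases (SimpleGraph.mem_edgeSet _).1 heE with ⟨a, b, rfl, rfl, h⟩ | ⟨rfl, rfl⟩ | ⟨rfl, rfl⟩
      · refine Or.inl ⟨s(a, b), ⟨(K.mem_edgeSet).2 h, ?_⟩, rfl⟩
        rintro v hv
        rcases Sym2.mem_iff.1 hv with rfl | rfl
        · exact hev _ (Sym2.mem_mk_left _ _)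
        · exact hev _ (Sym2.mem_mk_right _ _)
      · exact Or.inr rfl
      · exact Or.inr (Sym2.eq_swap ▸ rfl)
  have hEcard : {e ∈ (addLeaf K z).edgeSet | ∀ v ∈ e, v ∈ s}.ncard ≤
      {f ∈ K.edgeSet | ∀ v ∈ f, v ∈ s'}.ncard + 1 := by
    calc {e ∈ (addLeaf K z).edgeSet | ∀ v ∈ e, v ∈ s}.ncard
        ≤ (Sym2.map Fin.castSucc '' {f ∈ K.edgeSet | ∀ v ∈ f, v ∈ s'}
            ∪ {s(z.castSucc, Fin.last m)}).ncard :=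
          Set.ncard_le_ncard hsubE (Set.toFinite _)
      _ ≤ (Sym2.map Fin.castSucc '' {f ∈ K.edgeSet | ∀ v ∈ f, v ∈ s'}).ncard + 1 := by
          have := Set.ncard_union_le
            (Sym2.map Fin.castSucc '' {f ∈ K.edgeSet | ∀ v ∈ f, v ∈ s'})
            ({s(z.castSucc, Fin.last m)} : Set (Sym2 (Fin (m+1))))
          rwa [Set.ncard_singleton] at this
      _ = {f ∈ K.edgeSet | ∀ v ∈ f, v ∈ s'}.ncard + 1 := by
          rw [Set.ncard_image_of_injective _ (Sym2.map.injective (Fin.castSucc_injective m))]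
  by_cases hlast : Fin.last m ∈ s
  · by_cases hs'ne : s'.Nonempty
    · have hKs := hK s' (Set.toFinite _) hs'ne
      have hscard : s.ncard = s'.ncard + 1 := by
        have : s = Fin.castSucc '' s' ∪ {Fin.last m} := by
          ext x
          constructor
          · intro hx
            by_cases hxl : x = Fin.last m
            · exact Or.inr hxl
            · obtain ⟨a, rfl⟩ := Fin.exists_castSucc_eq.2 hxl
              exact Or.inl ⟨a, hx, rfl⟩
          · rintro (⟨a, ha, rfl⟩ | hx)
            · exact ha
            · rw [Set.mem_singleton_iff] at hx
              exact hx ▸ hlast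
        rw [this, Set.ncard_union_eq ?_ (Set.toFinite _) (Set.toFinite _),
          Set.ncard_image_of_injective _ (Fin.castSucc_injective m), Set.ncard_singleton]
        rw [Set.disjoint_singleton_right]
        rintro ⟨b, _, hb⟩
        exact (Fin.castSucc_lt_last b).ne hb
      have h1 : ((({e ∈ (addLeaf K z).edgeSet | ∀ v ∈ e, v ∈ s}.ncard : ℕ)) : ℚ) ≤
          ({f ∈ K.edgeSet | ∀ v ∈ f, v ∈ s'}.ncard : ℚ) + 1 := by
        have := (Nat.cast_le (α := ℚ)).2 hEcard
        push_cast at this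
        linarith
      rw [hscard]
      push_cast
      linarith
    · -- s = {last}
      have hsub : s ⊆ {Fin.last m} := by
        intro x hx
        by_cases hxl : x = Fin.last m
        · exact hxl
        · obtain ⟨a, rfl⟩ := Fin.exists_castSucc_eq.2 hxl
          exact absurd ⟨a, hx⟩ hs'ne
      have hseq : s = {Fin.last m} :=
        Set.eq_singleton_iff_unique_mem.2 ⟨hlast, fun x hx => hsub hx⟩
      have hempty : {e ∈ (addLeaf K z).edgeSet | ∀ v ∈ e, v ∈ s} = ∅ := by
        rw [Set.eq_empty_iff_forall_notMem]
        rintro e ⟨heE, hev⟩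
        induction e using Sym2.ind with
        | _ x y =>
          have hx : x = Fin.last m := hsub (hev x (Sym2.mem_mk_left x y))
          have hy : y = Fin.last m := hsub (hev y (Sym2.mem_mk_right x y))
          have : (addLeaf K z).Adj x y := (SimpleGraph.mem_edgeSet _).1 heE
          rw [hx, hy] at this
          exact (addLeaf K z).loopless.irrefl _ this
      rw [hempty, hseq, Set.ncard_empty, Set.ncard_singleton]
      push_cast
      linarith
  · -- last ∉ s
    have hsubE2 : {e ∈ (addLeaf K z).edgeSet | ∀ v ∈ e, v ∈ s} ⊆
        Sym2.map Fin.castSucc '' {f ∈ K.edgeSet | ∀ v ∈ f, v ∈ s'} := by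
      intro e he
      rcases hsubE he with h | h
      · exact h
      · exfalso
        rw [Set.mem_singleton_iff] at h
        exact hlast (he.2 (Fin.last m) (h ▸ Sym2.mem_mk_right _ _))
    have hs'ne : s'.Nonempty := by
      obtain ⟨x, hx⟩ := hsne
      have hxl : x ≠ Fin.last m := fun h => hlast (h ▸ hx)
      obtain ⟨a, rfl⟩ := Fin.exists_castSucc_eq.2 hxl
      exact ⟨a, hx⟩
    have hscard : s.ncard = s'.ncard := by
      have : s = Fin.castSucc '' s' := by
        ext x
        constructor
        · intro hx
          have hxl : x ≠ Fin.last m := fun h => hlast (h ▸ hx)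
          obtain ⟨a, rfl⟩ := Fin.exists_castSucc_eq.2 hxl
          exact ⟨a, hx, rfl⟩
        · rintro ⟨a, ha, rfl⟩
          exact ha
      rw [this, Set.ncard_image_of_injective _ (Fin.castSucc_injective m)]
    have hKs := hK s' (Set.toFinite _) hs'ne
    have hEle : {e ∈ (addLeaf K z).edgeSet | ∀ v ∈ e, v ∈ s}.ncard ≤
        {f ∈ K.edgeSet | ∀ v ∈ f, v ∈ s'}.ncard := by
      calc {e ∈ (addLeaf K z).edgeSet | ∀ v ∈ e, v ∈ s}.ncard
          ≤ (Sym2.map Fin.castSucc '' {f ∈ K.edgeSet | ∀ v ∈ f, v ∈ s'}).ncard :=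
            Set.ncard_le_ncard hsubE2 (Set.toFinite _)
        _ = _ := Set.ncard_image_of_injective _ (Sym2.map.injective (Fin.castSucc_injective m))
    have := (Nat.cast_le (α := ℚ)).2 hEle
    rw [hscard]
    linarith

end AddLeaf

section DegTwo

variable {m : ℕ}

lemma confSet_small {K : SimpleGraph (Fin m)} (hdeg : ∀ x, natDeg K x ≤ 2)
    {e : Sym2 (Fin m)} (he : e ∈ K.edgeSet) : (confSet K e).ncard < 10 := by
  induction e using Sym2.ind with
  | _ x y =>
    have hadj : K.Adj x y := (K.mem_edgeSet).1 he
    have hincb : ∀ b, (K.incidenceSet b).ncard ≤ 2 := fun b => by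
      rw [ncard_incidenceSet]; exact hdeg b
    set U1 : Set (Sym2 (Fin m)) := ⋃ b ∈ K.neighborSet x \ {y}, K.incidenceSet b with hU1def
    set U2 : Set (Sym2 (Fin m)) := ⋃ b ∈ K.neighborSet y \ {x}, K.incidenceSet b with hU2def
    set A : Set (Sym2 (Fin m)) :=
      K.incidenceSet x ∪ K.incidenceSet y ∪ U1 ∪ U2 with hA
    have hUbound : ∀ (p q : Fin m), K.Adj p q →
        (⋃ b ∈ K.neighborSet p \ {q}, K.incidenceSet b).ncard ≤ 2 := by
      intro p q hpq
      have hqp : q ∈ K.neighborSet p := hpq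
      have hsmall : (K.neighborSet p \ {q}).ncard ≤ 1 := by
        rw [Set.ncard_diff_singleton_of_mem hqp]
        have := hdeg p
        rw [natDeg_eq_ncard] at this
        omega
      rcases (Set.ncard_le_one_iff_eq (Set.toFinite _)).1 hsmall with h0 | ⟨b0, hb0⟩
      · rw [h0, Set.biUnion_empty, Set.ncard_empty]
        omega
      · rw [hb0, Set.biUnion_singleton]
        exact hincb b0
    have hAcard : A.ncard ≤ 8 := by
      calc A.ncard ≤ (K.incidenceSet x ∪ K.incidenceSet y ∪ U1).ncard + U2.ncard :=
            Set.ncard_union_le _ _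
        _ ≤ (K.incidenceSet x ∪ K.incidenceSet y).ncard + U1.ncard + U2.ncard := by
            have := Set.ncard_union_le (K.incidenceSet x ∪ K.incidenceSet y) U1
            omega
        _ ≤ (K.incidenceSet x).ncard + (K.incidenceSet y).ncard + U1.ncard + U2.ncard := by
            have := Set.ncard_union_le (K.incidenceSet x) (K.incidenceSet y)
            omega
        _ ≤ 2 + 2 + 2 + 2 := by
            have h1 := hincb x
            have h2 := hincb y
            have h3 := hUbound x y hadj
            have h4 := hUbound y x hadj.symm
            rw [← hU1def] at h3
            rw [← hU2def] at h4
            omega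
        _ = 8 := by norm_num
    have heA : s(x, y) ∈ A := Or.inl (Or.inl (Or.inl ⟨he, Sym2.mem_mk_left x y⟩))
    have hsub : confSet K s(x, y) ⊆ A \ {s(x, y)} := by
      rintro f ⟨hfE, hfne, a, ha, b, hb, hab⟩
      refine ⟨?_, hfne⟩
      have hbinc : f ∈ K.incidenceSet b := ⟨hfE, hb⟩
      rcases hab with rfl | hadj'
      · -- a = b, a ∈ e
        rcases Sym2.mem_iff.1 ha with rfl | rfl
        · exact Or.inl (Or.inl (Or.inl hbinc))
        · exact Or.inl (Or.inl (Or.inr hbinc))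
      · -- b adjacent to a ∈ e
        rcases Sym2.mem_iff.1 ha with rfl | rfl
        · by_cases hby : b = y
          · exact Or.inl (Or.inl (Or.inr (hby ▸ hbinc)))
          · exact Or.inl (Or.inr (Set.mem_biUnion ⟨hadj', hby⟩ hbinc))
        · by_cases hbx : b = x
          · exact Or.inl (Or.inl (Or.inl (hbx ▸ hbinc)))
          · exact Or.inr (Set.mem_biUnion ⟨hadj', hbx⟩ hbinc)
    have hdiff : (A \ {s(x, y)}).ncard ≤ 7 := by
      rw [Set.ncard_diff_singleton_of_mem heA]
      omega
    have := Set.ncard_le_ncard hsub (Set.toFinite _)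
    omega

lemma ssIndex_le_ten_of_deg_le_two {K : SimpleGraph (Fin m)} (hdeg : ∀ x, natDeg K x ≤ 2) :
    ssIndex K ≤ 10 :=
  ssIndex_le_of_conf K (fun _ he => confSet_small hdeg he)

end DegTwo

section Main

lemma leaf_neighborSet {n : ℕ} {G : SimpleGraph (Fin n)} {x v : Fin n}
    (h1 : natDeg G x = 1) (h2 : G.Adj x v) : G.neighborSet x = {v} := by
  obtain ⟨a, ha⟩ := Set.ncard_eq_one.1 (natDeg_eq_ncard G x ▸ h1)
  have hv : v ∈ G.neighborSet x := h2
  rw [ha, Set.mem_singleton_iff] at hv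
  rw [ha, hv]

lemma ssIndex_le_of_not_cex {m : ℕ} {H : SimpleGraph (Fin m)} (hconn : H.Connected)
    (hmad : MadLT H (8/3)) (hnc : ¬ IsCex H) {D : ℕ} (hD4 : 4 ≤ D)
    (hub : ∀ v, natDeg H v ≤ D) (hex : ∃ v, natDeg H v = D) : ssIndex H ≤ 2*D+2 := by
  by_contra hlt
  push_neg at hlt
  exact hnc ⟨hconn, hmad, D, hD4, hub, hex, hlt⟩

theorem minimal_cex_min_degree' {n : ℕ} (G : SimpleGraph (Fin n)) (hG : IsCex G)
    (hmin : ∀ (m : ℕ) (H : SimpleGraph (Fin m)), IsCex H →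
      n + G.edgeSet.ncard ≤ m + H.edgeSet.ncard) :
    ∀ v : ({v : Fin n | natDeg G v ≠ 1} : Set (Fin n)),
      2 ≤ natDeg (G.induce {v : Fin n | natDeg G v ≠ 1}) v := by
  obtain ⟨hconn, hmad, D, hD4, hub, ⟨vD, hvD⟩, hss⟩ := hG
  set S : Set (Fin n) := {v : Fin n | natDeg G v ≠ 1} with hSdef
  rintro ⟨v, hv⟩
  by_contra hlt
  push_neg at hlt
  -- the degree of v in G* equals the number of its neighbors in S
  have hind : natDeg (G.induce S) (⟨v, hv⟩ : S) = (G.neighborSet v ∩ S).ncard := by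
    have h := natDeg_comap (G := G) (f := (Subtype.val : S → Fin n))
      Subtype.val_injective ⟨v, hv⟩
    rwa [Subtype.range_coe] at h
  have hcap : (G.neighborSet v ∩ S).ncard ≤ 1 := by
    rw [← hind]; omega
  -- v has degree at least 2
  have hdegv2 : 2 ≤ natDeg G v := by
    have hne1 : natDeg G v ≠ 1 := hv
    rcases Nat.lt_or_ge (natDeg G v) 2 with h | h
    · exfalso
      have h0 : natDeg G v = 0 := by omega
      have hNe : G.neighborSet v = ∅ :=
        (Set.ncard_eq_zero (Set.toFinite _)).1 (natDeg_eq_ncard G v ▸ h0)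
      by_cases hvvD : v = vD
      · rw [← hvvD] at hvD
        omega
      · obtain ⟨p⟩ := hconn.preconnected v vD
        have hnil : ¬ p.Nil := SimpleGraph.Walk.not_nil_of_ne hvvD
        have hadj := p.adj_snd hnil
        have : p.getVert 1 ∈ G.neighborSet v := hadj
        rw [hNe] at this
        exact this
    · exact h
  -- v has a pendant neighbor u
  have hNsplit : natDeg G v ≤ (G.neighborSet v ∩ S).ncard + (G.neighborSet v \ S).ncard := by
    rw [natDeg_eq_ncard]
    calc (G.neighborSet v).ncard
        ≤ ((G.neighborSet v ∩ S) ∪ (G.neighborSet v \ S)).ncard := by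
          apply Set.ncard_le_ncard _ (Set.toFinite _)
          intro x hx
          by_cases hxS : x ∈ S
          · exact Or.inl ⟨hx, hxS⟩
          · exact Or.inr ⟨hx, hxS⟩
      _ ≤ _ := Set.ncard_union_le _ _
  obtain ⟨u, huNv, huS⟩ : ∃ u, u ∈ G.neighborSet v ∧ u ∉ S := by
    have h1 : 1 ≤ (G.neighborSet v \ S).ncard := by omega
    obtain ⟨u, hu⟩ := (Set.ncard_pos (s := G.neighborSet v \ S) (Set.toFinite _)).1 (by omega)
    exact ⟨u, hu.1, hu.2⟩
  have hudeg : natDeg G u = 1 := not_not.1 huS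
  have hadjvu : G.Adj v u := huNv
  have hu : G.neighborSet u = {v} := leaf_neighborSet hudeg hadjvu.symm
  have huv : u ≠ v := (G.ne_of_adj hadjvu).symm
  -- the designated neighbor w
  obtain ⟨w, hwprop, hwu, hwSv⟩ :
      ∃ w, (∀ x ∈ G.neighborSet v ∩ S, x = w) ∧ w ≠ u ∧ (w ∈ S ∨ w = v) := by
    by_cases hWS : (G.neighborSet v ∩ S).Nonempty
    · obtain ⟨w, hw⟩ := hWS
      refine ⟨w, ?_, ?_, Or.inl hw.2⟩
      · intro x hx
        exact (Set.ncard_le_one (Set.toFinite _)).1 hcap x hx w hw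
      · intro hc
        exact huS (hc ▸ hw.2)
    · refine ⟨v, ?_, Ne.symm huv, Or.inr rfl⟩
      intro x hx
      exact absurd ⟨x, hx⟩ hWS
  have hw : ∀ x, G.Adj v x → x = u ∨ x = w ∨ G.neighborSet x = {v} := by
    intro x hx
    by_cases hxS : x ∈ S
    · exact Or.inr (Or.inl (hwprop x ⟨hx, hxS⟩))
    · exact Or.inr (Or.inr (leaf_neighborSet (not_not.1 hxS) hx.symm))
  -- pass to G - u
  obtain ⟨m, rfl⟩ := Nat.exists_eq_succ_of_ne_zero (Nat.pos_iff_ne_zero.1 v.pos)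
  set σ := u.succAbove with hσdef
  set H := G.comap σ with hHdef
  have hHconn : H.Connected := del_connected hconn hu
  have hHmad : MadLT H (8/3) := MadLT_comap Fin.succAbove_right_injective hmad
  have hedge : H.edgeSet.ncard + 1 = G.edgeSet.ncard := by
    have h := ncard_edgeSet_del G u
    rwa [hudeg] at h
  -- it suffices to color G - u
  have hext : ssIndex H ≤ 2*D+2 → False := by
    intro hH
    have hkk : natDeg G v + natDeg G w ≤ 2*D+2 := by
      have h1 := hub v
      have h2 := hub w
      omega
    have := extension hu hwu hw hkk hH
    omega
  apply hext
  by_cases hbig : ∃ x, 4 ≤ natDeg H x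
  · -- the maximum degree of H is still at least 4
    obtain ⟨x4, hx4⟩ := hbig
    obtain ⟨v0, hv0⟩ := Fin.exists_succAbove_eq (Ne.symm huv)
    obtain ⟨xm, _, hxm⟩ := Finset.exists_max_image Finset.univ (natDeg H)
      ⟨v0, Finset.mem_univ v0⟩
    set D' := natDeg H xm with hD'def
    have hD'4 : 4 ≤ D' := le_trans hx4 (hxm x4 (Finset.mem_univ x4))
    have hD'D : D' ≤ D := le_trans (natDeg_comap_le Fin.succAbove_right_injective xm) (hub _)
    have hnc : ¬ IsCex H := by
      intro hc
      have := hmin m H hc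
      omega
    have := ssIndex_le_of_not_cex hHconn hHmad hnc hD'4
      (fun x => hxm x (Finset.mem_univ x)) ⟨xm, rfl⟩
    omega
  · -- all degrees in H are at most 3
    push_neg at hbig
    have hbig3 : ∀ x, natDeg H x ≤ 3 := fun x => by have := hbig x; omega
    -- D = 4 and v is the vertex of maximum degree
    have hvDu : vD ≠ u := by
      intro hc
      rw [hc, hudeg] at hvD
      omega
    obtain ⟨x0, hx0⟩ := Fin.exists_succAbove_eq hvDu
    have hx0deg : natDeg G vD ≤ natDeg H x0 + 1 := by
      have := natDeg_del_ge G u x0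
      rwa [show u.succAbove x0 = vD from hx0] at this
    have hD4eq : D = 4 := by
      have := hbig3 x0
      omega
    have hvDv : vD = v := by
      by_contra hc
      have hnadj : u ∈ G.neighborSet vD := by
        by_contra hnadj
        have : natDeg H x0 = (G.neighborSet (σ x0) \ {u}).ncard := natDeg_del G u x0
        rw [show σ x0 = vD from hx0] at this
        have hdiff : G.neighborSet vD \ {u} = G.neighborSet vD := by
          rw [Set.diff_singleton_eq_self hnadj]
        rw [hdiff, ← natDeg_eq_ncard, hvD] at this
        have := hbig3 x0
        omega
      have : vD ∈ G.neighborSet u := ((G.mem_neighborSet _ _).1 hnadj).symm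
      rw [hu, Set.mem_singleton_iff] at this
      exact hc this
    have hdegv4 : natDeg G v = 4 := by rw [← hvDv, hvD, hD4eq]
    rw [hD4eq]
    norm_num
    -- a second pendant neighbor u2 of v
    obtain ⟨u2, hu2NS, hu2u⟩ : ∃ u2, u2 ∈ G.neighborSet v \ S ∧ u2 ≠ u := by
      have h3 : 3 ≤ (G.neighborSet v \ S).ncard := by omega
      have : ¬ (G.neighborSet v \ S ⊆ {u}) := by
        intro hsub
        have := Set.ncard_le_ncard hsub (Set.toFinite _)
        rw [Set.ncard_singleton] at this
        omega
      obtain ⟨u2, hu2, hu2u⟩ := Set.not_subset.1 this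
      exact ⟨u2, hu2, hu2u⟩
    have hu2deg : natDeg G u2 = 1 := not_not.1 hu2NS.2
    have hadjvu2 : G.Adj v u2 := hu2NS.1
    have hu2leaf : G.neighborSet u2 = {v} := leaf_neighborSet hu2deg hadjvu2.symm
    obtain ⟨u2', hu2'⟩ := Fin.exists_succAbove_eq hu2u
    obtain ⟨v0, hv0⟩ := Fin.exists_succAbove_eq (Ne.symm huv)
    have hpre_single : ∀ y : Fin (m+1), y ≠ u → ∀ y0, σ y0 = y →
        σ ⁻¹' ({y} : Set (Fin (m+1))) = {y0} := by
      intro y hy y0 hy0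
      ext a
      simp only [Set.mem_preimage, Set.mem_singleton_iff]
      constructor
      · intro h
        exact Fin.succAbove_right_injective (h.trans hy0.symm)
      · rintro rfl
        exact hy0
    have hu2H : H.neighborSet u2' = {v0} := by
      rw [hHdef, comap_neighborSet, show σ u2' = u2 from hu2', hu2leaf]
      exact hpre_single v (Ne.symm huv) v0 hv0
    -- w in H
    have hwne_u2 : w ≠ u2 := by
      intro hc
      rcases hwSv with hwS | hwv
      · exact hu2NS.2 (hc ▸ hwS)
      · exact (G.ne_of_adj hadjvu2) (hwv.symm.trans hc)
    obtain ⟨w0, hw0⟩ := Fin.exists_succAbove_eq hwu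
    have hw0u2' : w0 ≠ u2' := by
      intro hc
      apply hwne_u2
      rw [← hw0, hc, hu2']
    have hwH : ∀ x, H.Adj v0 x → x = u2' ∨ x = w0 ∨ H.neighborSet x = {v0} := by
      intro x hx
      have hadjG : G.Adj v (σ x) := by
        have h' : G.Adj (σ v0) (σ x) := hx
        rwa [show σ v0 = v from hv0] at h'
      rcases hw (σ x) hadjG with hxu | hxw | hleaf
      · exfalso
        have h' : σ x ∈ Set.range σ := ⟨x, rfl⟩
        rw [hσdef, Fin.range_succAbove] at h'
        exact h' hxu
      · exact Or.inr (Or.inl (Fin.succAbove_right_injective (hxw.trans hw0.symm)))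
      · refine Or.inr (Or.inr ?_)
        rw [hHdef, comap_neighborSet, hleaf]
        exact hpre_single v (Ne.symm huv) v0 hv0
    have hkH : natDeg H v0 + natDeg H w0 ≤ 2*4+2 := by
      have h1 := hbig3 v0
      have h2 := hbig3 w0
      omega
    have hu2'deg : natDeg H u2' = 1 := by
      rw [natDeg_eq_ncard, hu2H, Set.ncard_singleton]
    obtain ⟨m', rfl⟩ := Nat.exists_eq_succ_of_ne_zero (Nat.pos_iff_ne_zero.1 v0.pos)
    set τ := u2'.succAbove with hτdef
    set H2 := H.comap τ with hH2def
    have hH2conn : H2.Connected := del_connected hHconn hu2H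
    have hH2mad : MadLT H2 (8/3) := MadLT_comap Fin.succAbove_right_injective hHmad
    have hedge2 : H2.edgeSet.ncard + 1 = H.edgeSet.ncard := by
      have h := ncard_edgeSet_del H u2'
      rwa [hu2'deg] at h
    have hdegH2 : ∀ x, natDeg H2 x ≤ 3 :=
      fun x => le_trans (natDeg_comap_le Fin.succAbove_right_injective x) (hbig3 _)
    have hH2ss : ssIndex H2 ≤ 10 := by
      by_cases hz : ∃ z, natDeg H2 z = 3
      · obtain ⟨z, hz3⟩ := hz
        set K := addLeaf H2 z with hKdef
        have hKconn : K.Connected := addLeaf_connected hH2conn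
        have hKmad : MadLT K (8/3) := MadLT_addLeaf (by norm_num) hH2mad
        have hKub : ∀ x, natDeg K x ≤ 4 := by
          intro x
          by_cases hxl : x = Fin.last m'
          · rw [hxl, hKdef, natDeg_addLeaf_last]
            omega
          · obtain ⟨a, rfl⟩ := Fin.exists_castSucc_eq.2 hxl
            rw [hKdef, natDeg_addLeaf_cast]
            have h' := hdegH2 a
            by_cases haz : a = z
            · rw [if_pos haz]
              omega
            · rw [if_neg haz]
              omega
        have hKex : natDeg K z.castSucc = 4 := by
          rw [hKdef, natDeg_addLeaf_cast, if_pos rfl, hz3]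
        have hKedge : K.edgeSet.ncard = H2.edgeSet.ncard + 1 := ncard_edgeSet_addLeaf
        have hKnc : ¬ IsCex K := by
          intro hc
          have := hmin (m'+1) K hc
          omega
        have hKss : ssIndex K ≤ 2*4+2 :=
          ssIndex_le_of_not_cex hKconn hKmad hKnc (by norm_num) hKub ⟨z.castSucc, hKex⟩
        have hdel : K.comap (Fin.last m').succAbove = H2 := del_addLeaf
        calc ssIndex H2 = ssIndex (K.comap (Fin.last m').succAbove) := by rw [hdel]
          _ ≤ ssIndex K := ssIndex_comap_le Fin.succAbove_right_injective
          _ ≤ 10 := by omega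
      · push_neg at hz
        exact ssIndex_le_ten_of_deg_le_two (fun x => by
          have h1 := hdegH2 x
          have h2 := hz x
          omega)
    have hfin := extension hu2H hw0u2' hwH hkH
      (show ssIndex (H.comap u2'.succAbove) ≤ 2*4+2 by rw [← hτdef, ← hH2def]; omega)
    omega

end Main

/-- If `G` is a minimal counterexample (in `|V|+|E|`) and `G*` is obtained from `G` by
deleting all vertices of degree 1, then `G*` has minimum degree at least 2. -/
theorem minimal_cex_min_degree {n : ℕ} (G : SimpleGraph (Fin n)) (hG : IsCex G)
    (hmin : ∀ (m : ℕ) (H : SimpleGraph (Fin m)), IsCex H →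
      n + G.edgeSet.ncard ≤ m + H.edgeSet.ncard) :
    ∀ v : ({v : Fin n | natDeg G v ≠ 1} : Set (Fin n)),
      2 ≤ natDeg (G.induce {v : Fin n | natDeg G v ≠ 1}) v :=
  minimal_cex_min_degree' G hG hmin

end SSE
end

section
/- For every graph G with maximum degree Δ ≥ 1, the complete bipartite graph K_{Δ,Δ} satisfies χ'_ss(K_{Δ,Δ}) = Δ², and every graph G with maximum degree Δ satisfies χ'_ss(G) ≤ Δ². -/
namespace SSE

open SimpleGraph

variable {V : Type*} {W : Type*}

/-! ### Auxiliary lemmas -/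

section Aux

open Classical in
lemma mem_cov_iff {M : Set (Sym2 V)} {x : V} : x ∈ cov M ↔ ∃ p ∈ M, x ∈ p := Iff.rfl

lemma exists_eq_mk_of_mem {G : SimpleGraph V} {p : Sym2 V} (hp : p ∈ G.edgeSet) {x : V}
    (hx : x ∈ p) : ∃ y, G.Adj x y ∧ p = s(x, y) := by
  induction p with
  | _ a b =>
    rw [SimpleGraph.mem_edgeSet] at hp
    rcases Sym2.mem_iff.1 hx with rfl | rfl
    · exact ⟨b, hp, rfl⟩
    · exact ⟨a, hp.symm, Sym2.eq_swap⟩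

lemma subsingleton_semistrong {G : SimpleGraph V} {M : Set (Sym2 V)}
    (hME : M ⊆ G.edgeSet) (h : M.Subsingleton) : IsSemistrongMatching G M := by
  constructor
  · refine ⟨hME, fun e he f hf hef => absurd (h he hf) hef⟩
  · intro e he
    obtain ⟨u, v, huv, rfl⟩ : ∃ u v, G.Adj u v ∧ e = s(u, v) := by
      obtain ⟨y, hy, hey⟩ := exists_eq_mk_of_mem (hME he) (Sym2.out_fst_mem e)
      exact ⟨_, _, hy, hey⟩
    refine ⟨u, by simp, ⟨s(u,v), he, by simp⟩, v, ⟨⟨s(u,v), he, by simp⟩, huv⟩, ?_⟩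
    rintro w ⟨⟨f, hf, hwf⟩, hadj⟩
    have : f = s(u, v) := h hf he
    subst this
    rcases Sym2.mem_iff.1 hwf with rfl | rfl
    · exact absurd hadj (G.irrefl)
    · rfl

end Aux

section PartA

variable {Δ : ℕ}

local notation "KB" => completeBipartiteGraph (Fin Δ) (Fin Δ)

lemma kb_edge_form {p : Sym2 (Fin Δ ⊕ Fin Δ)} (hp : p ∈ (KB).edgeSet) :
    ∃ i j, p = s(Sum.inl i, Sum.inr j) := by
  induction p with
  | _ a b =>
    rw [SimpleGraph.mem_edgeSet] at hp
    rcases hp with ⟨ha, hb⟩ | ⟨ha, hb⟩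
    · rcases a with a | a
      · rcases b with b | b
        · simp at hb
        · exact ⟨a, b, rfl⟩
      · simp at ha
    · rcases b with b | b
      · rcases a with a | a
        · simp at ha
        · exact ⟨b, a, Sym2.eq_swap⟩
      · simp at hb

lemma kb_semistrong_subsingleton {M : Set (Sym2 (Fin Δ ⊕ Fin Δ))}
    (h : IsSemistrongMatching KB M) : M.Subsingleton := by
  intro e he f hf
  by_contra hef
  obtain ⟨a, b, rfl⟩ := kb_edge_form (h.1.1 he)
  obtain ⟨a', b', rfl⟩ := kb_edge_form (h.1.1 hf)
  have hdisj := h.1.2 _ he _ hf hef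
  have hab : a ≠ a' := by
    intro hh; subst hh
    exact hdisj (Sum.inl a) (by simp) (by simp)
  have hbb : b ≠ b' := by
    intro hh; subst hh
    exact hdisj (Sum.inr b) (by simp) (by simp)
  obtain ⟨x, hxe, -, w, hw, huniq⟩ := h.2 _ he
  rcases Sym2.mem_iff.1 hxe with rfl | rfl
  · -- x = inl a; both inr b and inr b' are covered neighbors
    have h1 : Sum.inr b = w := huniq _ ⟨⟨_, he, by simp⟩, by simp⟩
    have h2 : (Sum.inr b' : Fin Δ ⊕ Fin Δ) = w := huniq _ ⟨⟨_, hf, by simp⟩, by simp⟩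
    rw [← h2] at h1
    exact hbb (by injection h1)
  · have h1 : Sum.inl a = w := huniq _ ⟨⟨_, he, by simp⟩, by simp⟩
    have h2 : (Sum.inl a' : Fin Δ ⊕ Fin Δ) = w := huniq _ ⟨⟨_, hf, by simp⟩, by simp⟩
    rw [← h2] at h1
    exact hab (by injection h1)

lemma kb_col_exists (hΔ : 1 ≤ Δ) :
    ∃ c, IsPColoring KB IsSemistrongMatching c (Δ ^ 2) := by
  classical
  refine ⟨Sym2.lift ⟨fun x y =>
      match x, y with
      | Sum.inl i, Sum.inr j => (i : ℕ) * Δ + (j : ℕ)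
      | Sum.inr j, Sum.inl i => (i : ℕ) * Δ + (j : ℕ)
      | _, _ => 0, ?_⟩, ?_, ?_⟩
  · rintro (i | i) (j | j) <;> rfl
  · intro e he
    obtain ⟨i, j, rfl⟩ := kb_edge_form he
    have hj : (j : ℕ) < Δ := j.isLt
    simp only [Sym2.lift_mk]
    have h1 : (i : ℕ) + 1 ≤ Δ := i.isLt
    have h2 : ((i : ℕ) + 1) * Δ ≤ Δ * Δ := Nat.mul_le_mul_right _ h1
    have h3 : ((i : ℕ) + 1) * Δ = (i : ℕ) * Δ + Δ := by ring
    rw [pow_two]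
    omega
  · intro k
    apply subsingleton_semistrong (fun p hp => hp.1)
    rintro e ⟨he, hce⟩ f ⟨hf, hcf⟩
    obtain ⟨i, j, rfl⟩ := kb_edge_form he
    obtain ⟨i', j', rfl⟩ := kb_edge_form hf
    simp only [Sym2.lift_mk] at hce hcf
    have h : (i : ℕ) * Δ + (j : ℕ) = (i' : ℕ) * Δ + (j' : ℕ) := by omega
    have key : (i : ℕ) = (i' : ℕ) ∧ (j : ℕ) = (j' : ℕ) := by
      rcases Nat.lt_trichotomy (i : ℕ) (i' : ℕ) with hlt | heq | hlt
      · exfalso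
        have hm : ((i : ℕ) + 1) * Δ ≤ (i' : ℕ) * Δ := Nat.mul_le_mul_right _ hlt
        have hr : ((i : ℕ) + 1) * Δ = (i : ℕ) * Δ + Δ := by ring
        have := j.isLt; omega
      · constructor
        · exact heq
        · rw [heq] at h; omega
      · exfalso
        have hm : ((i' : ℕ) + 1) * Δ ≤ (i : ℕ) * Δ := Nat.mul_le_mul_right _ hlt
        have hr : ((i' : ℕ) + 1) * Δ = (i' : ℕ) * Δ + Δ := by ring
        have := j'.isLt; omega
    have hi := key.1
    have hj := key.2
    have : i = i' := Fin.ext hi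
    have : j = j' := Fin.ext hj
    subst this; subst ‹i = i'›
    rfl

lemma partA (hΔ : 1 ≤ Δ) : ssIndex KB = Δ ^ 2 := by
  classical
  obtain ⟨c₀, hc₀⟩ := kb_col_exists hΔ
  refine le_antisymm (Nat.sInf_le ⟨c₀, hc₀⟩) (le_csInf ⟨_, c₀, hc₀⟩ ?_)
  rintro k ⟨c, hcb, hcl⟩
  have hinj : Function.Injective (fun ij : Fin Δ × Fin Δ =>
      (⟨c s(Sum.inl ij.1, Sum.inr ij.2), hcb _ (by simp)⟩ : Fin k)) := by
    rintro ⟨i, j⟩ ⟨i', j'⟩ h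
    simp only [Fin.mk.injEq] at h
    have hsub := kb_semistrong_subsingleton (hcl (c s(Sum.inl i, Sum.inr j)))
    have : s(Sum.inl i, Sum.inr j) = s(Sum.inl i', Sum.inr j') := by
      refine hsub ⟨by simp, rfl⟩ ⟨by simp, h.symm⟩
    rcases Sym2.eq_iff.1 this with ⟨h1, h2⟩ | ⟨h1, h2⟩
    · simp only [Sum.inl.injEq, Sum.inr.injEq] at h1 h2; simp [h1, h2]
    · simp at h1
  have := Fintype.card_le_of_injective _ hinj
  simpa [pow_two] using this

end PartA

section PartB

variable {U : Type}

/-- color classes -/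
def Mc (G : SimpleGraph U) (c : Sym2 U → ℕ) (i : ℕ) : Set (Sym2 U) :=
  {e | e ∈ G.edgeSet ∧ c e = i}

/-- edges of `G` induced on the vertices covered by `M` -/
def IndE (G : SimpleGraph U) (M : Set (Sym2 U)) : Set (Sym2 U) :=
  {p | p ∈ G.edgeSet ∧ ∀ x ∈ p, x ∈ cov M}

/-- the potential: total number of induced edges over the first `K` classes -/
noncomputable def Phi [Fintype U] (G : SimpleGraph U) (K : ℕ) (c : Sym2 U → ℕ) : ℕ :=
  ∑ i ∈ Finset.range K, (IndE G (Mc G c i)).ncard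

/-- a `K`-coloring whose classes are matchings -/
def Good (G : SimpleGraph U) (K : ℕ) (c : Sym2 U → ℕ) : Prop :=
  (∀ e ∈ G.edgeSet, c e < K) ∧ ∀ i : ℕ, IsMatchingSet G (Mc G c i)

lemma matching_subset {G : SimpleGraph U} {M M' : Set (Sym2 U)}
    (hM : IsMatchingSet G M) (h : M' ⊆ M) : IsMatchingSet G M' :=
  ⟨h.trans hM.1, fun e he f hf hef => hM.2 e (h he) f (h hf) hef⟩

lemma matching_insert {G : SimpleGraph U} {M : Set (Sym2 U)} {u v : U}
    (hM : IsMatchingSet G M) (huv : G.Adj u v) (hu : u ∉ cov M) (hv : v ∉ cov M) :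
    IsMatchingSet G (M ∪ {s(u, v)}) := by
  constructor
  · rintro p (hp | rfl)
    · exact hM.1 hp
    · exact (G.mem_edgeSet).2 huv
  · rintro e (he | rfl) f (hf | rfl) hef x hxe hxf
    · exact hM.2 e he f hf hef x hxe hxf
    · rcases Sym2.mem_iff.1 hxf with rfl | rfl
      · exact hu ⟨e, he, hxe⟩
      · exact hv ⟨e, he, hxe⟩
    · rcases Sym2.mem_iff.1 hxe with rfl | rfl
      · exact hu ⟨f, hf, hxf⟩
      · exact hv ⟨f, hf, hxf⟩
    · exact hef rfl

lemma not_cov_of_nbr_empty {G : SimpleGraph U} {M : Set (Sym2 U)} {u : U}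
    (hME : M ⊆ G.edgeSet) (h : G.neighborSet u ∩ cov M = ∅) : u ∉ cov M := by
  rintro ⟨p, hp, hup⟩
  obtain ⟨z, hz, rfl⟩ := exists_eq_mk_of_mem (hME hp) hup
  have : z ∈ G.neighborSet u ∩ cov M := ⟨hz, ⟨_, hp, by simp⟩⟩
  rw [h] at this
  exact this

lemma cov_diff {G : SimpleGraph U} {M : Set (Sym2 U)} {u v : U}
    (hM : IsMatchingSet G M) (he : s(u, v) ∈ M) :
    cov (M \ {s(u, v)}) = cov M \ {u, v} := by
  ext x
  constructor
  · rintro ⟨p, ⟨hp, hpe⟩, hxp⟩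
    refine ⟨⟨p, hp, hxp⟩, ?_⟩
    intro hx
    have hxe : x ∈ s(u, v) := by
      rcases hx with rfl | rfl <;> simp
    exact hM.2 p hp _ he (fun h => hpe (h ▸ rfl)) x hxp hxe
  · rintro ⟨⟨p, hp, hxp⟩, hx⟩
    refine ⟨p, ⟨hp, ?_⟩, hxp⟩
    rintro rfl
    rcases Sym2.mem_iff.1 hxp with rfl | rfl
    · exact hx (Or.inl rfl)
    · exact hx (Or.inr rfl)

lemma cov_union {M : Set (Sym2 U)} {u v : U} :
    cov (M ∪ {s(u, v)}) = cov M ∪ {u, v} := by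
  ext x
  constructor
  · rintro ⟨p, hp | rfl, hxp⟩
    · exact Or.inl ⟨p, hp, hxp⟩
    · right; rcases Sym2.mem_iff.1 hxp with rfl | rfl
      · exact Or.inl rfl
      · exact Or.inr rfl
  · rintro (⟨p, hp, hxp⟩ | hx)
    · exact ⟨p, Or.inl hp, hxp⟩
    · refine ⟨s(u, v), Or.inr rfl, ?_⟩
      rcases hx with rfl | rfl <;> simp

end PartB

section Counting

variable {U : Type} [Fintype U]

lemma ncard_IndE_diff {G : SimpleGraph U} {M : Set (Sym2 U)} {u v : U}
    (hM : IsMatchingSet G M) (huv : G.Adj u v) (he : s(u, v) ∈ M) :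
    (IndE G (M \ {s(u, v)})).ncard
      + (((G.neighborSet u \ {v}) ∩ cov M).ncard
          + ((G.neighborSet v \ {u}) ∩ cov M).ncard + 1)
      = (IndE G M).ncard := by
  classical
  have hne : u ≠ v := huv.ne
  set A : Set U := (G.neighborSet u \ {v}) ∩ cov M with hA
  set B : Set U := (G.neighborSet v \ {u}) ∩ cov M with hB
  set Tu : Set (Sym2 U) := (fun w => s(u, w)) '' A with hTu
  set Tv : Set (Sym2 U) := (fun w => s(v, w)) '' B with hTv
  have hcov : cov (M \ {s(u, v)}) = cov M \ {u, v} := cov_diff hM he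
  have hucov : u ∈ cov M := ⟨_, he, by simp⟩
  have hvcov : v ∈ cov M := ⟨_, he, by simp⟩
  have hsplit : IndE G M = IndE G (M \ {s(u, v)}) ∪ ({s(u, v)} ∪ (Tu ∪ Tv)) := by
    ext p
    constructor
    · rintro ⟨hpE, hpcov⟩
      by_cases hup : u ∈ p
      · obtain ⟨w, hw, rfl⟩ := exists_eq_mk_of_mem hpE hup
        by_cases hwv : w = v
        · subst hwv; right; left; rfl
        · right; right; left
          exact ⟨w, ⟨⟨hw, hwv⟩, hpcov w (by simp)⟩, rfl⟩
      · by_cases hvp : v ∈ p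
        · obtain ⟨w, hw, rfl⟩ := exists_eq_mk_of_mem hpE hvp
          have hwu : w ≠ u := fun h => hup (h ▸ (by simp))
          right; right; right
          exact ⟨w, ⟨⟨hw, hwu⟩, hpcov w (by simp)⟩, rfl⟩
        · left
          refine ⟨hpE, ?_⟩
          intro x hx
          rw [hcov]
          refine ⟨hpcov x hx, ?_⟩
          rintro (rfl | rfl)
          · exact hup hx
          · exact hvp hx
    · rintro (⟨hpE, hpcov⟩ | (rfl | (⟨w, hwA, rfl⟩ | ⟨w, hwB, rfl⟩)))
      · refine ⟨hpE, fun x hx => ?_⟩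
        have := hpcov x hx
        rw [hcov] at this
        exact this.1
      · refine ⟨(G.mem_edgeSet).2 huv, fun x hx => ?_⟩
        rcases Sym2.mem_iff.1 hx with rfl | rfl
        · exact hucov
        · exact hvcov
      · refine ⟨(G.mem_edgeSet).2 hwA.1.1, fun x hx => ?_⟩
        rcases Sym2.mem_iff.1 hx with rfl | rfl
        · exact hucov
        · exact hwA.2
      · refine ⟨(G.mem_edgeSet).2 hwB.1.1, fun x hx => ?_⟩
        rcases Sym2.mem_iff.1 hx with rfl | rfl
        · exact hvcov
        · exact hwB.2
  have hd1 : Disjoint (IndE G (M \ {s(u, v)})) ({s(u, v)} ∪ (Tu ∪ Tv)) := by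
    rw [Set.disjoint_left]
    rintro p ⟨hpE, hpcov⟩ hp
    have huv' : u ∈ p ∨ v ∈ p := by
      rcases hp with rfl | (⟨w, _, rfl⟩ | ⟨w, _, rfl⟩)
      · left; simp
      · left; simp
      · right; simp
    rcases huv' with h | h
    · have := hpcov u h; rw [hcov] at this; exact this.2 (Or.inl rfl)
    · have := hpcov v h; rw [hcov] at this; exact this.2 (Or.inr rfl)
  have hd2 : Disjoint ({s(u, v)} : Set (Sym2 U)) (Tu ∪ Tv) := by
    rw [Set.disjoint_left]
    rintro p rfl (⟨w, hwA, hw⟩ | ⟨w, hwB, hw⟩)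
    · have : w = v := Sym2.congr_right.1 hw
      exact hwA.1.2 this
    · rw [Sym2.eq_swap (a := u)] at hw
      have : w = u := Sym2.congr_right.1 hw
      exact hwB.1.2 this
  have hd3 : Disjoint Tu Tv := by
    rw [Set.disjoint_left]
    rintro p ⟨w, hwA, rfl⟩ ⟨w', hwB, hw⟩
    have hw2 : s(v, w') = s(u, w) := hw
    have hu' : u ∈ s(v, w') := by rw [hw2]; exact Sym2.mem_mk_left u w
    rcases Sym2.mem_iff.1 hu' with rfl | rfl
    · exact hne rfl
    · exact hwB.1.2 rfl
  have hcu : Tu.ncard = A.ncard := by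
    apply Set.ncard_image_of_injOn
    intro w _ w' _ h
    exact Sym2.congr_right.1 h
  have hcv : Tv.ncard = B.ncard := by
    apply Set.ncard_image_of_injOn
    intro w _ w' _ h
    exact Sym2.congr_right.1 h
  rw [hsplit, Set.ncard_union_eq hd1 (Set.toFinite _) (Set.toFinite _),
    Set.ncard_union_eq hd2 (Set.toFinite _) (Set.toFinite _),
    Set.ncard_union_eq hd3 (Set.toFinite _) (Set.toFinite _),
    Set.ncard_singleton, hcu, hcv]
  omega

lemma ncard_IndE_insert {G : SimpleGraph U} {M : Set (Sym2 U)} {u v : U}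
    (hM : IsMatchingSet G M) (huv : G.Adj u v)
    (hNu : G.neighborSet u ∩ cov M = ∅) (hv : v ∉ cov M) :
    (IndE G (M ∪ {s(u, v)})).ncard
      = (IndE G M).ncard + (((G.neighborSet v \ {u}) ∩ cov M).ncard + 1) := by
  classical
  have hne : u ≠ v := huv.ne
  have hu : u ∉ cov M := not_cov_of_nbr_empty hM.1 hNu
  set B : Set U := (G.neighborSet v \ {u}) ∩ cov M with hB
  set Tv : Set (Sym2 U) := (fun w => s(v, w)) '' B with hTv
  have hcov : cov (M ∪ {s(u, v)}) = cov M ∪ {u, v} := cov_union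
  have hsplit : IndE G (M ∪ {s(u, v)}) = IndE G M ∪ ({s(u, v)} ∪ Tv) := by
    ext p
    constructor
    · rintro ⟨hpE, hpcov⟩
      rw [hcov] at hpcov
      by_cases hup : u ∈ p
      · obtain ⟨w, hw, rfl⟩ := exists_eq_mk_of_mem hpE hup
        rcases hpcov w (by simp) with hwcov | hw'
        · exfalso
          have : w ∈ G.neighborSet u ∩ cov M := ⟨hw, hwcov⟩
          rw [hNu] at this; exact this
        · rcases hw' with rfl | rfl
          · exact absurd rfl hw.ne'
          · right; left; rfl
      · by_cases hvp : v ∈ p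
        · obtain ⟨w, hw, rfl⟩ := exists_eq_mk_of_mem hpE hvp
          have hwu : w ≠ u := fun h => hup (h ▸ (by simp))
          rcases hpcov w (by simp) with hwcov | hw'
          · right; right; exact ⟨w, ⟨⟨hw, hwu⟩, hwcov⟩, rfl⟩
          · rcases hw' with rfl | rfl
            · exact absurd rfl hwu
            · exact absurd rfl hw.ne'
        · left
          refine ⟨hpE, fun x hx => ?_⟩
          rcases hpcov x hx with h | h
          · exact h
          · exfalso; rcases h with rfl | rfl
            · exact hup hx
            · exact hvp hx
    · rintro (⟨hpE, hpcov⟩ | (rfl | ⟨w, hwB, rfl⟩))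
      · refine ⟨hpE, fun x hx => ?_⟩
        rw [hcov]; exact Or.inl (hpcov x hx)
      · refine ⟨(G.mem_edgeSet).2 huv, fun x hx => ?_⟩
        rw [hcov]
        rcases Sym2.mem_iff.1 hx with rfl | rfl
        · exact Or.inr (Or.inl rfl)
        · exact Or.inr (Or.inr rfl)
      · refine ⟨(G.mem_edgeSet).2 hwB.1.1, fun x hx => ?_⟩
        rw [hcov]
        rcases Sym2.mem_iff.1 hx with rfl | rfl
        · exact Or.inr (Or.inr rfl)
        · exact Or.inl hwB.2
  have hd1 : Disjoint (IndE G M) ({s(u, v)} ∪ Tv) := by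
    rw [Set.disjoint_left]
    rintro p ⟨hpE, hpcov⟩ (rfl | ⟨w, hwB, rfl⟩)
    · exact hu (hpcov u (by simp))
    · exact hv (hpcov v (by simp))
  have hd2 : Disjoint ({s(u, v)} : Set (Sym2 U)) Tv := by
    rw [Set.disjoint_left]
    rintro p rfl ⟨w, hwB, hw⟩
    rw [Sym2.eq_swap (a := u)] at hw
    have : w = u := Sym2.congr_right.1 hw
    exact hwB.1.2 this
  have hcv : Tv.ncard = B.ncard := by
    apply Set.ncard_image_of_injOn
    intro w _ w' _ h
    exact Sym2.congr_right.1 h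
  rw [hsplit, Set.ncard_union_eq hd1 (Set.toFinite _) (Set.toFinite _),
    Set.ncard_union_eq hd2 (Set.toFinite _) (Set.toFinite _),
    Set.ncard_singleton, hcv]
  omega

end Counting

section Move

open scoped Classical

variable {U : Type} [Fintype U]

lemma Mc_update_other {G : SimpleGraph U} {c : Sym2 U → ℕ} {e : Sym2 U} {i1 i : ℕ}
    (h0 : c e ≠ i) (h1 : i1 ≠ i) : Mc G (Function.update c e i1) i = Mc G c i := by
  classical
  ext p
  by_cases hp : p = e
  · subst hp
    simp only [Mc, Set.mem_setOf_eq, Function.update_self]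
    exact ⟨fun h => absurd h.2 h1, fun h => absurd h.2 h0⟩
  · simp only [Mc, Set.mem_setOf_eq, Function.update_of_ne hp]

lemma Mc_update_self {G : SimpleGraph U} {c : Sym2 U → ℕ} {e : Sym2 U} {i1 : ℕ}
    (h1 : i1 ≠ c e) : Mc G (Function.update c e i1) (c e) = Mc G c (c e) \ {e} := by
  classical
  ext p
  by_cases hp : p = e
  · subst hp
    simp only [Mc, Set.mem_setOf_eq, Function.update_self, Set.mem_diff,
      Set.mem_singleton_iff]
    exact ⟨fun h => absurd h.2 h1, fun h => absurd trivial h.2⟩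
  · simp only [Mc, Set.mem_setOf_eq, Function.update_of_ne hp, Set.mem_diff,
      Set.mem_singleton_iff]
    tauto

lemma Mc_update_target {G : SimpleGraph U} {c : Sym2 U → ℕ} {e : Sym2 U} {i1 : ℕ}
    (heE : e ∈ G.edgeSet) : Mc G (Function.update c e i1) i1 = Mc G c i1 ∪ {e} := by
  classical
  ext p
  by_cases hp : p = e
  · subst hp
    simp only [Mc, Set.mem_setOf_eq, Function.update_self, Set.mem_union,
      Set.mem_singleton_iff]
    tauto
  · simp only [Mc, Set.mem_setOf_eq, Function.update_of_ne hp, Set.mem_union,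
      Set.mem_singleton_iff]
    tauto

lemma move_lemma {G : SimpleGraph U} {K : ℕ} {c : Sym2 U → ℕ} (hG : Good G K c)
    {u v : U} (huv : G.Adj u v) {i1 : ℕ} (hi1K : i1 < K) (hne : i1 ≠ c s(u, v))
    (hNu : G.neighborSet u ∩ cov (Mc G c i1) = ∅) :
    Good G K (Function.update c s(u, v) i1) ∧
      Phi G K (Function.update c s(u, v) i1)
          + (((G.neighborSet u \ {v}) ∩ cov (Mc G c (c s(u, v)))).ncard
              + ((G.neighborSet v \ {u}) ∩ cov (Mc G c (c s(u, v)))).ncard + 1)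
        = Phi G K c + (((G.neighborSet v \ {u}) ∩ cov (Mc G c i1)).ncard + 1) := by
  classical
  set e : Sym2 U := s(u, v) with hedef
  have heE : e ∈ G.edgeSet := (G.mem_edgeSet).2 huv
  set i0 : ℕ := c e with hi0
  have hi0K : i0 < K := hG.1 e heE
  have heM : e ∈ Mc G c i0 := ⟨heE, rfl⟩
  have hv1 : v ∉ cov (Mc G c i1) := by
    intro hv
    have : v ∈ G.neighborSet u ∩ cov (Mc G c i1) := ⟨huv, hv⟩
    rw [hNu] at this; exact this
  have hu1 : u ∉ cov (Mc G c i1) := not_cov_of_nbr_empty (hG.2 i1).1 hNu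
  set c' : Sym2 U → ℕ := Function.update c e i1 with hc'
  have hMc0 : Mc G c' i0 = Mc G c i0 \ {e} := Mc_update_self hne
  have hMc1 : Mc G c' i1 = Mc G c i1 ∪ {e} := Mc_update_target heE
  have hMcO : ∀ i, i ≠ i0 → i ≠ i1 → Mc G c' i = Mc G c i := fun i h0 h1 =>
    Mc_update_other (Ne.symm h0) (Ne.symm h1)
  have hGood' : Good G K c' := by
    constructor
    · intro p hp
      by_cases hpe : p = e
      · subst hpe; rw [hc', Function.update_self]; exact hi1K
      · rw [hc', Function.update_of_ne hpe]; exact hG.1 p hp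
    · intro i
      by_cases h0 : i = i0
      · rw [h0, hMc0]
        exact matching_subset (hG.2 i0) Set.diff_subset
      · by_cases h1 : i = i1
        · rw [h1, hMc1]
          exact matching_insert (hG.2 i1) huv hu1 hv1
        · rw [hMcO i (fun h => h0 h) (fun h => h1 h)]
          exact hG.2 i
  refine ⟨hGood', ?_⟩
  have hi1mem : i1 ∈ (Finset.range K).erase i0 :=
    Finset.mem_erase.2 ⟨fun h => hne (h ▸ rfl), Finset.mem_range.2 hi1K⟩
  have hsum : ∀ d : Sym2 U → ℕ,
      Phi G K d = (IndE G (Mc G d i0)).ncard + ((IndE G (Mc G d i1)).ncard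
        + ∑ i ∈ ((Finset.range K).erase i0).erase i1, (IndE G (Mc G d i)).ncard) := by
    intro d
    rw [Phi, ← Finset.add_sum_erase _ _ (Finset.mem_range.2 hi0K),
      ← Finset.add_sum_erase _ _ hi1mem]
  rw [hsum c, hsum c']
  have hrest : ∑ i ∈ ((Finset.range K).erase i0).erase i1, (IndE G (Mc G c' i)).ncard
      = ∑ i ∈ ((Finset.range K).erase i0).erase i1, (IndE G (Mc G c i)).ncard := by
    apply Finset.sum_congr rfl
    intro i hi
    have h1 := (Finset.mem_erase.1 hi).1
    have h0 := (Finset.mem_erase.1 (Finset.mem_erase.1 hi).2).1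
    rw [hMcO i h0 h1]
  have hrem := ncard_IndE_diff (hG.2 i0) huv heM
  have hins := ncard_IndE_insert (hG.2 i1) huv hNu hv1
  rw [← hedef] at hrem hins
  rw [hrest, hMc0, hMc1]
  omega

end Move

section Greedy

open scoped Classical

variable {U : Type} [Fintype U]

lemma card_other_le {G : SimpleGraph U} (Δ : ℕ) (hdeg : ∀ x, natDeg G x ≤ Δ)
    {F : Finset (Sym2 U)} (hFE : ∀ p ∈ F, p ∈ G.edgeSet) {u v : U} (huv : G.Adj u v)
    (ha : s(u, v) ∉ F) : (F.filter (fun p => u ∈ p)).card ≤ Δ - 1 := by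
  classical
  set NB : Finset U := (Set.toFinite (G.neighborSet u)).toFinset with hNB
  have hvNB : v ∈ NB := (Set.Finite.mem_toFinset _).2 huv
  have hNBcard : NB.card = natDeg G u := by
    rw [natDeg, Set.ncard_eq_toFinset_card]
  refine le_trans (Finset.card_le_card_of_injOn (t := NB.erase v)
    (fun p => if h : ∃ z, G.Adj u z ∧ p = s(u, z) then h.choose else u) ?_ ?_) ?_
  · intro p hp
    rw [Finset.mem_coe, Finset.mem_filter] at hp
    have hEx : ∃ z, G.Adj u z ∧ p = s(u, z) := by
      obtain ⟨z, hz, hpz⟩ := exists_eq_mk_of_mem (hFE p hp.1) hp.2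
      exact ⟨z, hz, hpz⟩
    have hfp : (fun p => if h : ∃ z, G.Adj u z ∧ p = s(u, z) then h.choose else u) p
        = hEx.choose := dif_pos hEx
    rw [hfp]
    obtain ⟨hz, hpz⟩ := hEx.choose_spec
    refine Finset.mem_erase.2 ⟨?_, (Set.Finite.mem_toFinset _).2 hz⟩
    rintro rfl
    rw [hpz] at hp
    exact ha hp.1
  · intro p hp q hq hpq
    rw [Finset.mem_coe, Finset.mem_filter] at hp hq
    have hExp : ∃ z, G.Adj u z ∧ p = s(u, z) := by
      obtain ⟨z, hz, hpz⟩ := exists_eq_mk_of_mem (hFE p hp.1) hp.2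
      exact ⟨z, hz, hpz⟩
    have hExq : ∃ z, G.Adj u z ∧ q = s(u, z) := by
      obtain ⟨z, hz, hqz⟩ := exists_eq_mk_of_mem (hFE q hq.1) hq.2
      exact ⟨z, hz, hqz⟩
    have hfp : (fun p => if h : ∃ z, G.Adj u z ∧ p = s(u, z) then h.choose else u) p
        = hExp.choose := dif_pos hExp
    have hfq : (fun p => if h : ∃ z, G.Adj u z ∧ p = s(u, z) then h.choose else u) q
        = hExq.choose := dif_pos hExq
    rw [hfp, hfq] at hpq
    rw [hExp.choose_spec.2, hExq.choose_spec.2, hpq]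
  · rw [Finset.card_erase_of_mem hvNB, hNBcard]
    exact Nat.sub_le_sub_right (hdeg u) 1

lemma exists_good (G : SimpleGraph U) (Δ : ℕ) (hΔ : 1 ≤ Δ) (hdeg : ∀ x, natDeg G x ≤ Δ) :
    ∃ c, Good G (Δ ^ 2) c := by
  classical
  suffices h : ∀ F : Finset (Sym2 U), (∀ p ∈ F, p ∈ G.edgeSet) →
      ∃ c : Sym2 U → ℕ, (∀ p ∈ F, c p < Δ ^ 2) ∧
        ∀ i : ℕ, IsMatchingSet G {p | p ∈ (F : Set (Sym2 U)) ∧ c p = i} by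
    obtain ⟨c, hc1, hc2⟩ := h G.edgeFinset (fun p hp => (SimpleGraph.mem_edgeFinset).1 hp)
    refine ⟨c, fun p hp => hc1 p ((SimpleGraph.mem_edgeFinset).2 hp), fun i => ?_⟩
    have : Mc G c i = {p | p ∈ (G.edgeFinset : Set (Sym2 U)) ∧ c p = i} := by
      ext p; simp [Mc]
    rw [this]
    exact hc2 i
  intro F
  induction F using Finset.induction_on with
  | empty =>
    intro _
    refine ⟨fun _ => 0, by simp, fun i => ⟨?_, ?_⟩⟩
    · rintro p ⟨hp, -⟩; simp at hp
    · rintro p ⟨hp, -⟩; simp at hp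
  | insert _ _ hnotmem _ =>
    rename_i a F ih
    intro hFE
    obtain ⟨c₀, hc1, hc2⟩ := ih (fun p hp => hFE p (Finset.mem_insert_of_mem hp))
    have haE : a ∈ G.edgeSet := hFE a (Finset.mem_insert_self a F)
    obtain ⟨u, v, huv, rfl⟩ : ∃ u v, G.Adj u v ∧ a = s(u, v) := by
      obtain ⟨y, hy, hey⟩ := exists_eq_mk_of_mem haE (Sym2.out_fst_mem a)
      exact ⟨_, _, hy, hey⟩
    set bad : Finset ℕ :=
      (F.filter (fun p => u ∈ p) ∪ F.filter (fun p => v ∈ p)).image c₀ with hbad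
    have hbadcard : bad.card < Δ ^ 2 := by
      have h1 := card_other_le Δ hdeg (fun p hp => hFE p (Finset.mem_insert_of_mem hp))
        huv hnotmem
      have h2 := card_other_le Δ hdeg (fun p hp => hFE p (Finset.mem_insert_of_mem hp))
        huv.symm (by rw [Sym2.eq_swap (a := v)]; exact hnotmem)
      have h3 : bad.card ≤ (Δ - 1) + (Δ - 1) := by
        refine le_trans (Finset.card_image_le) (le_trans (Finset.card_union_le _ _) ?_)
        have h2' : (F.filter (fun p => v ∈ p)).card ≤ Δ - 1 := by
          have := h2
          convert this using 3
        exact Nat.add_le_add h1 h2'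
      have h4 : Δ - 1 + (Δ - 1) < Δ ^ 2 := by
        obtain ⟨m, rfl⟩ := Nat.exists_eq_add_of_le hΔ
        have : (1 + m) ^ 2 = 1 + m + m + m * m := by ring
        omega
      omega
    have : ¬ (Finset.range (Δ ^ 2) ⊆ bad) := by
      intro hsub
      have := Finset.card_le_card hsub
      rw [Finset.card_range] at this
      omega
    obtain ⟨k, hkR, hkbad⟩ := Finset.not_subset.1 this
    have hkK : k < Δ ^ 2 := Finset.mem_range.1 hkR
    refine ⟨Function.update c₀ s(u, v) k, ?_, ?_⟩
    · intro p hp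
      rcases Finset.mem_insert.1 hp with rfl | hp'
      · rw [Function.update_self]; exact hkK
      · rw [Function.update_of_ne (fun h => hnotmem (by rw [← h]; exact hp'))]
        exact hc1 p hp'
    · intro i
      by_cases hik : k = i
      · subst hik
        have hcl : {p | p ∈ ((insert s(u, v) F : Finset (Sym2 U)) : Set (Sym2 U)) ∧
            Function.update c₀ s(u, v) k p = k}
            = {p | p ∈ (F : Set (Sym2 U)) ∧ c₀ p = k} ∪ {s(u, v)} := by
          ext p
          by_cases hpa : p = s(u, v)
          · subst hpa
            simp only [Set.mem_setOf_eq, Function.update_self, Set.mem_union,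
              Set.mem_singleton_iff, Finset.coe_insert, Set.mem_insert_iff]
            tauto
          · simp only [Set.mem_setOf_eq, Function.update_of_ne hpa, Set.mem_union,
              Set.mem_singleton_iff, Finset.coe_insert, Set.mem_insert_iff, hpa,
              false_or, or_false]
        rw [hcl]
        refine matching_insert (hc2 k) huv ?_ ?_
        · rintro ⟨p, ⟨hpF, hpk⟩, hup⟩
          refine hkbad ?_
          rw [hbad]
          exact Finset.mem_image.2 ⟨p, Finset.mem_union_left _
            (Finset.mem_filter.2 ⟨hpF, hup⟩), hpk⟩
        · rintro ⟨p, ⟨hpF, hpk⟩, hvp⟩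
          refine hkbad ?_
          rw [hbad]
          exact Finset.mem_image.2 ⟨p, Finset.mem_union_right _
            (Finset.mem_filter.2 ⟨hpF, hvp⟩), hpk⟩
      · have hcl : {p | p ∈ ((insert s(u, v) F : Finset (Sym2 U)) : Set (Sym2 U)) ∧
            Function.update c₀ s(u, v) k p = i}
            = {p | p ∈ (F : Set (Sym2 U)) ∧ c₀ p = i} := by
          ext p
          by_cases hpa : p = s(u, v)
          · subst hpa
            simp only [Set.mem_setOf_eq, Function.update_self, Finset.coe_insert,
              Set.mem_insert_iff]
            constructor
            · rintro ⟨-, h⟩; exact absurd h hik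
            · rintro ⟨h, -⟩; exact absurd h (fun h' => hnotmem (Finset.mem_coe.1 h'))
          · simp only [Set.mem_setOf_eq, Function.update_of_ne hpa, Finset.coe_insert,
              Set.mem_insert_iff, hpa, false_or]
        rw [hcl]
        exact hc2 i

end Greedy

section Counting2

open scoped Classical

variable {U : Type} [Fintype U]

lemma classes_cov_le {G : SimpleGraph U} {Δ K : ℕ} {c : Sym2 U → ℕ}
    (hdeg : ∀ x, natDeg G x ≤ Δ) (hG : Good G K c) (w : U) :
    ((Finset.range K).filter (fun i => w ∈ cov (Mc G c i))).card ≤ Δ := by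
  classical
  set NB : Finset U := (Set.toFinite (G.neighborSet w)).toFinset with hNB
  have hNBcard : NB.card = natDeg G w := by
    rw [natDeg, Set.ncard_eq_toFinset_card]
  refine le_trans (Finset.card_le_card_of_injOn (t := NB)
    (fun i => if h : ∃ z, G.Adj w z ∧ s(w, z) ∈ Mc G c i then h.choose else w) ?_ ?_)
    (le_trans hNBcard.le (hdeg w))
  · intro i hi
    rw [Finset.mem_coe, Finset.mem_filter] at hi
    obtain ⟨p, hpM, hwp⟩ := hi.2
    obtain ⟨z, hz, rfl⟩ := exists_eq_mk_of_mem ((hG.2 i).1 hpM) hwp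
    have hEx : ∃ z, G.Adj w z ∧ s(w, z) ∈ Mc G c i := ⟨z, hz, hpM⟩
    have hfp : (fun i => if h : ∃ z, G.Adj w z ∧ s(w, z) ∈ Mc G c i
        then h.choose else w) i = hEx.choose := dif_pos hEx
    rw [hfp]
    exact (Set.Finite.mem_toFinset _).2 hEx.choose_spec.1
  · intro i hi j hj hij
    rw [Finset.mem_coe, Finset.mem_filter] at hi hj
    have hExi : ∃ z, G.Adj w z ∧ s(w, z) ∈ Mc G c i := by
      obtain ⟨p, hpM, hwp⟩ := hi.2
      obtain ⟨z, hz, rfl⟩ := exists_eq_mk_of_mem ((hG.2 i).1 hpM) hwp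
      exact ⟨z, hz, hpM⟩
    have hExj : ∃ z, G.Adj w z ∧ s(w, z) ∈ Mc G c j := by
      obtain ⟨p, hpM, hwp⟩ := hj.2
      obtain ⟨z, hz, rfl⟩ := exists_eq_mk_of_mem ((hG.2 j).1 hpM) hwp
      exact ⟨z, hz, hpM⟩
    have hfi : (fun i => if h : ∃ z, G.Adj w z ∧ s(w, z) ∈ Mc G c i
        then h.choose else w) i = hExi.choose := dif_pos hExi
    have hfj : (fun i => if h : ∃ z, G.Adj w z ∧ s(w, z) ∈ Mc G c i
        then h.choose else w) j = hExj.choose := dif_pos hExj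
    rw [hfi, hfj] at hij
    have h1 : s(w, hExi.choose) ∈ Mc G c i := hExi.choose_spec.2
    have h2 : s(w, hExi.choose) ∈ Mc G c j := hij ▸ hExj.choose_spec.2
    rw [← h1.2, ← h2.2]

lemma sum_cov_le {G : SimpleGraph U} {Δ K : ℕ} {c : Sym2 U → ℕ}
    (hdeg : ∀ x, natDeg G x ≤ Δ) (hG : Good G K c) (S : Set U) :
    ∑ i ∈ Finset.range K, (S ∩ cov (Mc G c i)).ncard ≤ S.ncard * Δ := by
  classical
  set SF : Finset U := (Set.toFinite S).toFinset with hSF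
  have h1 : ∀ i, (S ∩ cov (Mc G c i)).ncard
      = (SF.filter (fun w => w ∈ cov (Mc G c i))).card := by
    intro i
    have hset : (↑(SF.filter (fun w => w ∈ cov (Mc G c i))) : Set U)
        = S ∩ cov (Mc G c i) := by
      ext w
      simp only [hSF, Finset.coe_filter, Set.mem_setOf_eq, Set.Finite.mem_toFinset,
        Set.mem_inter_iff]
    rw [← hset, Set.ncard_coe_finset]
  calc ∑ i ∈ Finset.range K, (S ∩ cov (Mc G c i)).ncard
      = ∑ i ∈ Finset.range K, ∑ w ∈ SF, (if w ∈ cov (Mc G c i) then 1 else 0) := by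
        refine Finset.sum_congr rfl fun i _ => ?_
        rw [h1 i, Finset.card_filter]
    _ = ∑ w ∈ SF, ∑ i ∈ Finset.range K, (if w ∈ cov (Mc G c i) then 1 else 0) :=
        Finset.sum_comm
    _ ≤ ∑ w ∈ SF, Δ := by
        refine Finset.sum_le_sum fun w _ => ?_
        rw [← Finset.card_filter]
        exact classes_cov_le hdeg hG w
    _ = SF.card * Δ := by rw [Finset.sum_const, smul_eq_mul]
    _ = S.ncard * Δ := by rw [Set.ncard_eq_toFinset_card]

end Counting2

section Main

open scoped Classical

variable {U : Type} [Fintype U]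

lemma main_upper (G : SimpleGraph U) (Δ : ℕ) (hΔ : 1 ≤ Δ) (hdeg : ∀ x, natDeg G x ≤ Δ) :
    ∃ c, IsPColoring G IsSemistrongMatching c (Δ ^ 2) := by
  classical
  obtain ⟨c₀, hc₀⟩ := exists_good G Δ hΔ hdeg
  have hSne : {n | ∃ c, Good G (Δ ^ 2) c ∧ Phi G (Δ ^ 2) c = n}.Nonempty :=
    ⟨_, c₀, hc₀, rfl⟩
  obtain ⟨c, hGood, hPhi⟩ := Nat.sInf_mem hSne
  have hmin : ∀ c', Good G (Δ ^ 2) c' → Phi G (Δ ^ 2) c ≤ Phi G (Δ ^ 2) c' := by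
    intro c' h
    rw [hPhi]
    exact Nat.sInf_le ⟨c', h, rfl⟩
  refine ⟨c, hGood.1, fun i => ?_⟩
  by_contra hbad
  have hbad' : ¬ IsSemistrongMatching G (Mc G c i) := hbad
  have hmatch := hGood.2 i
  have hnp : ¬ ∀ e ∈ Mc G c i, ∃ x, x ∈ e ∧ PendantIn G (Mc G c i) x :=
    fun h => hbad' ⟨hmatch, h⟩
  push_neg at hnp
  obtain ⟨e, heM, hpend⟩ := hnp
  obtain ⟨u, v, huv, rfl⟩ : ∃ u v, G.Adj u v ∧ e = s(u, v) := by
    obtain ⟨y, hy, hey⟩ := exists_eq_mk_of_mem (hmatch.1 heM) (Sym2.out_fst_mem e)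
    exact ⟨_, _, hy, hey⟩
  have hiK : i < Δ ^ 2 := by
    have := hGood.1 _ (hmatch.1 heM)
    rw [heM.2] at this
    exact this
  -- non-pendancy gives a covered neighbor besides the partner
  have key : ∀ x y : U, G.Adj x y → s(x, y) ∈ Mc G c i →
      (¬ PendantIn G (Mc G c i) x) →
      ((G.neighborSet x \ {y}) ∩ cov (Mc G c i)).Nonempty := by
    intro x y hxy hM hnp2
    have hx : x ∈ cov (Mc G c i) := ⟨_, hM, by simp⟩
    have hne : ¬ ∃! z, z ∈ cov (Mc G c i) ∧ G.Adj x z := fun h => hnp2 ⟨hx, h⟩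
    unfold ExistsUnique at hne
    push_neg at hne
    obtain ⟨w, hw, hwne⟩ := hne y ⟨⟨_, hM, by simp⟩, hxy⟩
    exact ⟨w, ⟨⟨hw.2, hwne⟩, hw.1⟩⟩
  have heM' : s(v, u) ∈ Mc G c i := by
    rw [Sym2.eq_swap]; exact heM
  have ha0 : 1 ≤ ((G.neighborSet u \ {v}) ∩ cov (Mc G c i)).ncard :=
    (Set.ncard_pos).2 (key u v huv heM (hpend u (by simp)))
  have hb0 : 1 ≤ ((G.neighborSet v \ {u}) ∩ cov (Mc G c i)).ncard :=
    (Set.ncard_pos).2 (key v u huv.symm heM' (hpend v (by simp)))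
  -- first minimality consequence (move with pendant side u)
  have hcon1 : ∀ i1, i1 < Δ ^ 2 → i1 ≠ i →
      ((G.neighborSet u \ {v}) ∩ cov (Mc G c i1)).ncard = 0 →
      v ∉ cov (Mc G c i1) →
      2 ≤ ((G.neighborSet v \ {u}) ∩ cov (Mc G c i1)).ncard := by
    intro i1 h1 h2 h3 h4
    have hempty : (G.neighborSet u \ {v}) ∩ cov (Mc G c i1) = ∅ :=
      (Set.ncard_eq_zero (Set.toFinite _)).1 h3
    have hNuE : G.neighborSet u ∩ cov (Mc G c i1) = ∅ := by
      ext x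
      simp only [Set.mem_inter_iff, Set.mem_empty_iff_false, iff_false, not_and]
      intro hx1 hx2
      by_cases hxv : x = v
      · subst hxv; exact h4 hx2
      · have : x ∈ (G.neighborSet u \ {v}) ∩ cov (Mc G c i1) := ⟨⟨hx1, hxv⟩, hx2⟩
        rw [hempty] at this
        exact this
    have hnec : i1 ≠ c s(u, v) := by rw [heM.2]; exact h2
    obtain ⟨hg', heq⟩ := move_lemma hGood huv h1 hnec hNuE
    have hle := hmin _ hg'
    rw [heM.2] at heq
    omega
  -- second minimality consequence (move with pendant side v)
  have hcon2 : ∀ i1, i1 < Δ ^ 2 → i1 ≠ i →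
      ((G.neighborSet v \ {u}) ∩ cov (Mc G c i1)).ncard = 0 →
      u ∉ cov (Mc G c i1) →
      2 ≤ ((G.neighborSet u \ {v}) ∩ cov (Mc G c i1)).ncard := by
    intro i1 h1 h2 h3 h4
    have hempty : (G.neighborSet v \ {u}) ∩ cov (Mc G c i1) = ∅ :=
      (Set.ncard_eq_zero (Set.toFinite _)).1 h3
    have hNvE : G.neighborSet v ∩ cov (Mc G c i1) = ∅ := by
      ext x
      simp only [Set.mem_inter_iff, Set.mem_empty_iff_false, iff_false, not_and]
      intro hx1 hx2
      by_cases hxu : x = u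
      · subst hxu; exact h4 hx2
      · have : x ∈ (G.neighborSet v \ {u}) ∩ cov (Mc G c i1) := ⟨⟨hx1, hxu⟩, hx2⟩
        rw [hempty] at this
        exact this
    have hswap : (s(v, u) : Sym2 U) = s(u, v) := Sym2.eq_swap
    have hnec : i1 ≠ c s(v, u) := by rw [hswap, heM.2]; exact h2
    obtain ⟨hg', heq⟩ := move_lemma hGood huv.symm h1 hnec hNvE
    have hle := hmin _ hg'
    rw [hswap] at heq hle
    rw [heM.2] at heq
    omega
  -- a class covering u (other than i) has a covered neighbor of u besides v
  have hcovu : ∀ j, j ≠ i → u ∈ cov (Mc G c j) →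
      1 ≤ ((G.neighborSet u \ {v}) ∩ cov (Mc G c j)).ncard := by
    intro j hj hu
    obtain ⟨p, hpM, hup⟩ := hu
    obtain ⟨z, hz, rfl⟩ := exists_eq_mk_of_mem ((hGood.2 j).1 hpM) hup
    have hzv : z ≠ v := by
      intro hzv
      apply hj
      have h5 : c s(u, z) = j := hpM.2
      rw [hzv, heM.2] at h5
      exact h5.symm
    exact (Set.ncard_pos).2 ⟨z, ⟨⟨hz, hzv⟩, ⟨_, hpM, by simp⟩⟩⟩
  have hcovv : ∀ j, j ≠ i → v ∈ cov (Mc G c j) →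
      1 ≤ ((G.neighborSet v \ {u}) ∩ cov (Mc G c j)).ncard := by
    intro j hj hv
    obtain ⟨p, hpM, hvp⟩ := hv
    obtain ⟨z, hz, rfl⟩ := exists_eq_mk_of_mem ((hGood.2 j).1 hpM) hvp
    have hzu : z ≠ u := by
      intro hzu
      apply hj
      have h5 : c s(v, z) = j := hpM.2
      have hswap : (s(v, u) : Sym2 U) = s(u, v) := Sym2.eq_swap
      rw [hzu, hswap, heM.2] at h5
      exact h5.symm
    exact (Set.ncard_pos).2 ⟨z, ⟨⟨hz, hzu⟩, ⟨_, hpM, by simp⟩⟩⟩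
  -- every class contributes at least one
  have hone : ∀ j, j < Δ ^ 2 →
      1 ≤ ((G.neighborSet u \ {v}) ∩ cov (Mc G c j)).ncard
        + ((G.neighborSet v \ {u}) ∩ cov (Mc G c j)).ncard := by
    intro j hjK
    by_cases hj : j = i
    · subst hj; omega
    · by_contra hcon
      push_neg at hcon
      have ha : ((G.neighborSet u \ {v}) ∩ cov (Mc G c j)).ncard = 0 := by omega
      by_cases hv : v ∈ cov (Mc G c j)
      · have := hcovv j hj hv; omega
      · have := hcon1 j hjK hj ha hv; omega
  -- classes contributing exactly one cover u or v
  have hlow : ∀ j, j < Δ ^ 2 →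
      ((G.neighborSet u \ {v}) ∩ cov (Mc G c j)).ncard
        + ((G.neighborSet v \ {u}) ∩ cov (Mc G c j)).ncard ≤ 1 →
      (u ∈ cov (Mc G c j) ∨ v ∈ cov (Mc G c j)) ∧ j ≠ i := by
    intro j hjK hle
    have hji : j ≠ i := by
      rintro rfl
      omega
    refine ⟨?_, hji⟩
    by_contra hc
    push_neg at hc
    by_cases ha : ((G.neighborSet u \ {v}) ∩ cov (Mc G c j)).ncard = 0
    · by_cases hv : v ∈ cov (Mc G c j)
      · exact hc.2 hv
      · have := hcon1 j hjK hji ha hv; omega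
    · have hb : ((G.neighborSet v \ {u}) ∩ cov (Mc G c j)).ncard = 0 := by omega
      have := hcon2 j hjK hji hb hc.1
      omega
  -- Finset bookkeeping
  have hiCu : i ∈ (Finset.range (Δ ^ 2)).filter (fun j => u ∈ cov (Mc G c j)) :=
    Finset.mem_filter.2 ⟨Finset.mem_range.2 hiK, ⟨_, heM, by simp⟩⟩
  have hiCv : i ∈ (Finset.range (Δ ^ 2)).filter (fun j => v ∈ cov (Mc G c j)) :=
    Finset.mem_filter.2 ⟨Finset.mem_range.2 hiK, ⟨_, heM, by simp⟩⟩
  have hCuK : ((Finset.range (Δ ^ 2)).filter (fun j => u ∈ cov (Mc G c j))).card ≤ Δ :=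
    classes_cov_le hdeg hGood u
  have hCvK : ((Finset.range (Δ ^ 2)).filter (fun j => v ∈ cov (Mc G c j))).card ≤ Δ :=
    classes_cov_le hdeg hGood v
  have hBsub : (Finset.range (Δ ^ 2)).filter (fun j =>
        ((G.neighborSet u \ {v}) ∩ cov (Mc G c j)).ncard
          + ((G.neighborSet v \ {u}) ∩ cov (Mc G c j)).ncard ≤ 1)
      ⊆ (((Finset.range (Δ ^ 2)).filter (fun j => u ∈ cov (Mc G c j))).erase i)
        ∪ (((Finset.range (Δ ^ 2)).filter (fun j => v ∈ cov (Mc G c j))).erase i) := by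
    intro j hj
    rw [Finset.mem_filter] at hj
    obtain ⟨hor, hji⟩ := hlow j (Finset.mem_range.1 hj.1) hj.2
    rcases hor with h | h
    · exact Finset.mem_union_left _
        (Finset.mem_erase.2 ⟨hji, Finset.mem_filter.2 ⟨hj.1, h⟩⟩)
    · exact Finset.mem_union_right _
        (Finset.mem_erase.2 ⟨hji, Finset.mem_filter.2 ⟨hj.1, h⟩⟩)
  -- the two sum upper bounds
  have hSa : ∑ j ∈ Finset.range (Δ ^ 2),
      ((G.neighborSet u \ {v}) ∩ cov (Mc G c j)).ncard ≤ (Δ - 1) * Δ := by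
    refine le_trans (sum_cov_le hdeg hGood _) ?_
    have hmem : (v : U) ∈ G.neighborSet u := huv
    have : (G.neighborSet u \ {v}).ncard ≤ Δ - 1 := by
      rw [Set.ncard_diff_singleton_of_mem hmem]
      exact Nat.sub_le_sub_right (hdeg u) 1
    exact Nat.mul_le_mul_right _ this
  have hSb : ∑ j ∈ Finset.range (Δ ^ 2),
      ((G.neighborSet v \ {u}) ∩ cov (Mc G c j)).ncard ≤ (Δ - 1) * Δ := by
    refine le_trans (sum_cov_le hdeg hGood _) ?_
    have hmem : (u : U) ∈ G.neighborSet v := huv.symm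
    have : (G.neighborSet v \ {u}).ncard ≤ Δ - 1 := by
      rw [Set.ncard_diff_singleton_of_mem hmem]
      exact Nat.sub_le_sub_right (hdeg v) 1
    exact Nat.mul_le_mul_right _ this
  -- the low-contribution classes
  set D : Finset ℕ :=
    (((Finset.range (Δ ^ 2)).filter (fun j => u ∈ cov (Mc G c j))).erase i)
      ∪ (((Finset.range (Δ ^ 2)).filter (fun j => v ∈ cov (Mc G c j))).erase i) with hD
  have hDsub : D ⊆ Finset.range (Δ ^ 2) := by
    intro j hj
    rw [hD, Finset.mem_union] at hj
    rcases hj with h | h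
    · exact (Finset.mem_filter.1 (Finset.mem_erase.1 h).2).1
    · exact (Finset.mem_filter.1 (Finset.mem_erase.1 h).2).1
  have hDcard : D.card ≤ (Δ - 1) + (Δ - 1) := by
    refine le_trans (Finset.card_union_le _ _) ?_
    have e1 := Finset.card_erase_of_mem hiCu
    have e2 := Finset.card_erase_of_mem hiCv
    omega
  have hsd : ∑ j ∈ Finset.range (Δ ^ 2) \ D,
        (((G.neighborSet u \ {v}) ∩ cov (Mc G c j)).ncard
          + ((G.neighborSet v \ {u}) ∩ cov (Mc G c j)).ncard)
      + ∑ j ∈ D,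
        (((G.neighborSet u \ {v}) ∩ cov (Mc G c j)).ncard
          + ((G.neighborSet v \ {u}) ∩ cov (Mc G c j)).ncard)
      = ∑ j ∈ Finset.range (Δ ^ 2),
        (((G.neighborSet u \ {v}) ∩ cov (Mc G c j)).ncard
          + ((G.neighborSet v \ {u}) ∩ cov (Mc G c j)).ncard) :=
    Finset.sum_sdiff hDsub
  have h2 : (Finset.range (Δ ^ 2) \ D).card * 2
      ≤ ∑ j ∈ Finset.range (Δ ^ 2) \ D,
        (((G.neighborSet u \ {v}) ∩ cov (Mc G c j)).ncard
          + ((G.neighborSet v \ {u}) ∩ cov (Mc G c j)).ncard) := by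
    have := Finset.card_nsmul_le_sum (Finset.range (Δ ^ 2) \ D)
      (fun j => ((G.neighborSet u \ {v}) ∩ cov (Mc G c j)).ncard
        + ((G.neighborSet v \ {u}) ∩ cov (Mc G c j)).ncard) 2
      (fun j hj => by
        rw [Finset.mem_sdiff] at hj
        by_contra hcon
        push_neg at hcon
        have hle1 : ((G.neighborSet u \ {v}) ∩ cov (Mc G c j)).ncard
            + ((G.neighborSet v \ {u}) ∩ cov (Mc G c j)).ncard ≤ 1 := by omega
        obtain ⟨hor, hji⟩ := hlow j (Finset.mem_range.1 hj.1) hle1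
        apply hj.2
        rw [hD, Finset.mem_union]
        rcases hor with h | h
        · exact Or.inl (Finset.mem_erase.2 ⟨hji, Finset.mem_filter.2 ⟨hj.1, h⟩⟩)
        · exact Or.inr (Finset.mem_erase.2 ⟨hji, Finset.mem_filter.2 ⟨hj.1, h⟩⟩))
    simpa [smul_eq_mul, Nat.mul_comm] using this
  have h1 : D.card * 1
      ≤ ∑ j ∈ D,
        (((G.neighborSet u \ {v}) ∩ cov (Mc G c j)).ncard
          + ((G.neighborSet v \ {u}) ∩ cov (Mc G c j)).ncard) := by
    have := Finset.card_nsmul_le_sum D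
      (fun j => ((G.neighborSet u \ {v}) ∩ cov (Mc G c j)).ncard
        + ((G.neighborSet v \ {u}) ∩ cov (Mc G c j)).ncard) 1
      (fun j hj => hone j (Finset.mem_range.1 (hDsub hj)))
    simpa [smul_eq_mul, Nat.mul_comm] using this
  have hcardsd : (Finset.range (Δ ^ 2) \ D).card = Δ ^ 2 - D.card := by
    rw [Finset.card_sdiff_of_subset hDsub, Finset.card_range]
  have hDK : D.card ≤ Δ ^ 2 := by
    have := Finset.card_le_card hDsub
    rwa [Finset.card_range] at this
  have htotal : ∑ j ∈ Finset.range (Δ ^ 2),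
      (((G.neighborSet u \ {v}) ∩ cov (Mc G c j)).ncard
        + ((G.neighborSet v \ {u}) ∩ cov (Mc G c j)).ncard)
      = (∑ j ∈ Finset.range (Δ ^ 2), ((G.neighborSet u \ {v}) ∩ cov (Mc G c j)).ncard)
        + ∑ j ∈ Finset.range (Δ ^ 2), ((G.neighborSet v \ {u}) ∩ cov (Mc G c j)).ncard :=
    Finset.sum_add_distrib
  have hKK : Δ ^ 2 = (Δ - 1) * Δ + Δ := by
    obtain ⟨m, rfl⟩ := Nat.exists_eq_add_of_le hΔ
    have h1 : 1 + m - 1 = m := by omega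
    rw [h1]
    ring
  omega

end Main

/-- `χ'_ss(K_{Δ,Δ}) = Δ²` for `Δ ≥ 1`, and every graph with maximum degree `Δ`
satisfies `χ'_ss(G) ≤ Δ²`. -/
theorem ssIndex_completeBipartite_and_upper_bound (Δ : ℕ) (hΔ : 1 ≤ Δ) :
    ssIndex (completeBipartiteGraph (Fin Δ) (Fin Δ)) = Δ ^ 2 ∧
    ∀ (V : Type) [Fintype V] (G : SimpleGraph V),
      (∀ v, natDeg G v ≤ Δ) → (∃ v, natDeg G v = Δ) → ssIndex G ≤ Δ ^ 2 := by
  constructor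
  · exact partA hΔ
  · intro V _ G hdeg _
    obtain ⟨c, hc⟩ := main_upper G Δ hΔ hdeg
    exact Nat.sInf_le ⟨c, hc⟩

end SSE
end
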